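/- Let v < w be π-minuscule elements for a dominant integral weight π, let W_P = Stab_W(π), and consider the Λ-Bruhat graph on [v,w]^P with constant admissible function Λ ≡ π. Then: (1) every edge x → y with x W_P < y W_P = x s_γ W_P has Chevalley multiplicity m_π(x,y) = ⟨π, γ∨⟩ = 1; (2) for every vertex x, the weight W_π(x) = x(π) − w(π) equals the sum β_1 + ⋯ + β_s of the edge roots along any directed chain x = x_0 →β_1 x_1 → ⋯ →β_s x_s = w in the graph; (3) the weight function W_π is injective on [v,w]^P. -/

import Mathlib

open scoped Classical BigOperators

/-- A bundled setting for a finite crystallographic root system together with its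
Weyl group, its action on the rational span of the weight lattice, reflections,
and the data of coefficients of roots in the basis of simple roots. -/
structure WeylSetting where
  /-- index set of the Dynkin diagram (simple roots) -/
  I : Type
  [fintypeI : Fintype I]
  [decEqI : DecidableEq I]
  /-- rational span of the weight lattice -/
  V : Type
  [acg : AddCommGroup V]
  [mod : Module ℚ V]
  /-- the Weyl group -/
  W : Type
  [grp : Group W]
  /-- the action of the Weyl group on weights -/
  act : W →* (V ≃ₗ[ℚ] V)
  /-- the simple roots -/
  simple : I → V
  /-- the (finite) set of roots -/
  roots : Finset V
  /-- `coroot β μ` is the pairing `⟨μ, β∨⟩` -/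
  coroot : V → (V →ₗ[ℚ] ℚ)
  /-- the reflection `s_β ∈ W` associated to a root `β` -/
  srefl : V → W
  /-- coefficients of a positive root in the basis of simple roots -/
  posCoeff : V → I → ℕ
  simple_mem : ∀ i, simple i ∈ roots
  simple_indep : LinearIndependent ℚ simple
  roots_neg : ∀ β ∈ roots, -β ∈ roots
  root_pos_or_neg : ∀ β ∈ roots,
    (∃ c : I → ℚ, (∀ i, 0 ≤ c i) ∧ β = ∑ i, c i • simple i) ∨
    (∃ c : I → ℚ, (∀ i, 0 ≤ c i) ∧ -β = ∑ i, c i • simple i)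
  coroot_self : ∀ β ∈ roots, coroot β β = 2
  crystallographic : ∀ β ∈ roots, ∀ γ ∈ roots, ∃ n : ℤ, coroot β γ = n
  posCoeff_spec : ∀ β ∈ roots,
    (∃ c : I → ℚ, (∀ i, 0 ≤ c i) ∧ β = ∑ i, c i • simple i) →
    β = ∑ i, (posCoeff β i : ℚ) • simple i
  srefl_apply : ∀ β ∈ roots, ∀ v : V, act (srefl β) v = v - coroot β v • β
  act_faithful : ∀ g : W, (∀ v : V, act g v = v) → g = 1
  roots_invariant : ∀ g : W, ∀ β ∈ roots, act g β ∈ roots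
  coroot_equivariant : ∀ g : W, ∀ β ∈ roots, ∀ v : V,
    coroot (act g β) (act g v) = coroot β v
  generated : ∀ g : W, ∃ l : List I, g = (l.map fun i => srefl (simple i)).prod

namespace WeylSetting

attribute [instance] fintypeI decEqI acg mod grp

variable (D : WeylSetting)

/-- the simple reflection attached to a node of the Dynkin diagram -/
def s (i : D.I) : D.W := D.srefl (D.simple i)

/-- the product `s_{i_1} ⋯ s_{i_r}` of the simple reflections listed in `l` -/
def wordProd (l : List D.I) : D.W := (l.map D.s).prod

/-- `β` is a positive root: a root which is a nonnegative combination of simple roots -/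
def IsPosRoot (β : D.V) : Prop :=
  β ∈ D.roots ∧ ∃ c : D.I → ℚ, (∀ i, 0 ≤ c i) ∧ β = ∑ i, c i • D.simple i

/-- the length of a Weyl group element -/
noncomputable def length (g : D.W) : ℕ :=
  sInf {n | ∃ l : List D.I, l.length = n ∧ D.wordProd l = g}

/-- `l` is a reduced word for `g` -/
def IsReduced (l : List D.I) (g : D.W) : Prop :=
  D.wordProd l = g ∧ l.length = D.length g

/-- the number of reduced words of `g` -/
noncomputable def RedCard (g : D.W) : ℕ := Nat.card {l : List D.I // D.IsReduced l g}

/-- the (strong) Bruhat order on the Weyl group -/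
def bruhatLE : D.W → D.W → Prop :=
  Relation.ReflTransGen
    (fun a b => (∃ β, D.IsPosRoot β ∧ b = D.srefl β * a) ∧ D.length a < D.length b)

/-- strict (strong) Bruhat order -/
def bruhatLT (a b : D.W) : Prop := D.bruhatLE a b ∧ a ≠ b

/-- the left weak Bruhat order: `a ≤_L b` iff `ℓ(b a⁻¹) + ℓ(a) = ℓ(b)` -/
def weakLE (a b : D.W) : Prop := D.length (b * a⁻¹) + D.length a = D.length b

/-- the height of a positive root: the sum of its coefficients in the simple roots -/
noncomputable def ht (β : D.V) : ℕ := ∑ i, D.posCoeff β i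

/-- an integral weight: the pairings with all positive coroots are integers -/
def IsIntegral (lam : D.V) : Prop :=
  ∀ β, D.IsPosRoot β → ∃ n : ℤ, D.coroot β lam = n

/-- a dominant integral weight -/
def IsDominant (lam : D.V) : Prop :=
  D.IsIntegral lam ∧ ∀ i, 0 ≤ D.coroot (D.simple i) lam

/-- a pre-dominant integral weight: `⟨λ, β∨⟩ ≥ -1` for all positive roots `β` -/
def IsPreDominant (lam : D.V) : Prop :=
  D.IsIntegral lam ∧ ∀ β, D.IsPosRoot β → -1 ≤ D.coroot β lam

/-- the diagram `D(λ) = {β ∈ R⁺ : ⟨λ, β∨⟩ = -1}` of a pre-dominant weight -/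
noncomputable def diagram (lam : D.V) : Finset D.V :=
  D.roots.filter fun β => D.IsPosRoot β ∧ D.coroot β lam = -1

/-- `IsWeightPath λ [β₁, …, β_r]` says that
`λ = λ₀ →β₁ λ₁ →β₂ ⋯ →β_r λ_r` is a `λ`-path, i.e. each `β_j` is a positive
root, `⟨λ_{j-1}, β_j∨⟩ = -1` and `λ_j = s_{β_j}(λ_{j-1})`. -/
def IsWeightPath : D.V → List D.V → Prop
  | _, [] => True
  | lam, β :: rest =>
      D.IsPosRoot β ∧ D.coroot β lam = -1 ∧
        IsWeightPath (D.act (D.srefl β) lam) rest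

/-- the term `1/β₁ ⋅ 1/(β₁+β₂) ⋅ … ⋅ 1/(β₁+⋯+β_r)` attached to a path
`(β₁, …, β_r)`, computed in a field `F` via a linear embedding `emb`. -/
noncomputable def pathTerm {F : Type} [Field F] [Algebra ℚ F]
    (emb : D.V →ₗ[ℚ] F) (l : List D.V) : F :=
  ∏ j ∈ Finset.range l.length, (emb ((l.take (j + 1)).sum))⁻¹

/-- `w` is a π-minuscule element (in the sense of Peterson). -/
def IsMinuscule (pi : D.V) (w : D.W) : Prop :=
  ∃ l : List D.I, D.IsReduced l w ∧
    ∀ k : Fin l.length,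
      D.coroot (D.simple (l.get k)) (D.act (D.wordProd (l.drop (k.val + 1))) pi) = 1

/-- the stabilizer `W_π = Stab_W(π)` of a weight -/
def stab (pi : D.V) : Subgroup D.W where
  carrier := {g | D.act g pi = pi}
  one_mem' := by simp
  mul_mem' := by
    intro a b ha hb
    simp only [Set.mem_setOf_eq] at *
    calc D.act (a * b) pi = D.act a (D.act b pi) := by rw [map_mul]; rfl
    _ = pi := by rw [hb, ha]
  inv_mem' := by
    intro a ha
    simp only [Set.mem_setOf_eq] at *
    calc D.act a⁻¹ pi = D.act a⁻¹ (D.act a pi) := by rw [ha]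
    _ = D.act (a⁻¹ * a) pi := by rw [map_mul]; rfl
    _ = pi := by simp

/-- `u` is the minimal-length representative of its coset `uH` -/
def IsMinRep (H : Subgroup D.W) (u : D.W) : Prop :=
  ∀ g : D.W, u⁻¹ * g ∈ H → D.length u ≤ D.length g

/-- `a` and `b` lie in the same coset of `H`, i.e. `aH = bH` -/
def SameCoset (H : Subgroup D.W) (a b : D.W) : Prop := a⁻¹ * b ∈ H

/-- `u →β w` in `W^P`: `β` is a positive root, `u, w` are minimal-length
representatives, `s_β w H = u H`, and `u < w` in Bruhat order -/
def Arrow (H : Subgroup D.W) (u w : D.W) (β : D.V) : Prop :=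
  D.IsPosRoot β ∧ D.IsMinRep H u ∧ D.IsMinRep H w ∧
    D.SameCoset H (D.srefl β * w) u ∧ D.bruhatLT u w

/-- `ArrowPath H w [β₁, …, β_r]` encodes a directed path
`x_r →β_r ⋯ → x_1 →β₁ x_0 = w` in the Bruhat graph on `W^P`. -/
def ArrowPath (H : Subgroup D.W) : D.W → List D.V → Prop
  | _, [] => True
  | w, β :: rest => ∃ u, D.Arrow H u w β ∧ ArrowPath H u rest

/-- directed paths as above whose vertices all lie above `v` in Bruhat order -/
def ArrowPathGE (H : Subgroup D.W) (v : D.W) : D.W → List D.V → Prop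
  | _, [] => True
  | w, β :: rest => ∃ u, D.Arrow H u w β ∧ D.bruhatLE v u ∧ ArrowPathGE H v u rest

/-- directed paths from `u` to `w`:
`u = x_r →β_r ⋯ → x_1 →β₁ x_0 = w` encoded by the list `[β₁, …, β_r]`. -/
def ArrowPathFromTo (H : Subgroup D.W) (u : D.W) : D.W → List D.V → Prop
  | w, [] => u = w
  | w, β :: rest => ∃ x, D.Arrow H x w β ∧ ArrowPathFromTo H u x rest

/-- `S(w) = {β ∈ R⁺ : s_β w < w}` -/
noncomputable def Sset (w : D.W) : Finset D.V :=
  D.roots.filter fun β => D.IsPosRoot β ∧ D.bruhatLT (D.srefl β * w) w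

/-- `S(w/v) = {β ∈ R⁺ : v ≤ s_β w < w}` -/
noncomputable def SsetSkew (v w : D.W) : Finset D.V :=
  D.roots.filter fun β =>
    D.IsPosRoot β ∧ D.bruhatLE v (D.srefl β * w) ∧ D.bruhatLT (D.srefl β * w) w

/-- an oriented edge `x → y` in the Bruhat graph of `G/P`: `x, y` are minimal
representatives, `xH < yH`, and `yH = x s_γ H` for some positive root `γ` -/
def GEdge (H : Subgroup D.W) (x y : D.W) : Prop :=
  D.IsMinRep H x ∧ D.IsMinRep H y ∧ D.bruhatLT x y ∧
    ∃ γ, D.IsPosRoot γ ∧ D.SameCoset H (x * D.srefl γ) y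

/-- the (unique) positive root `γ` with `yH = x s_γ H` attached to an edge -/
noncomputable def edgeRoot (H : Subgroup D.W) (x y : D.W) : D.V :=
  if h : ∃ γ, D.IsPosRoot γ ∧ D.SameCoset H (x * D.srefl γ) y then h.choose else 0

/-- `GChainTo H v t [x₁, …, x_r]` encodes a directed path
`v ≤ x_r → ⋯ → x_1 → x_0 = t` in the Bruhat graph of `G/P` -/
def GChainTo (H : Subgroup D.W) (v : D.W) : D.W → List D.W → Prop
  | _, [] => True
  | t, x :: rest => D.GEdge H x t ∧ D.bruhatLE v x ∧ GChainTo H v x rest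

/-- the weighted term
`(m_Λ(x_r,x_{r-1})/W_Λ(x_r)) ⋯ (m_Λ(x_1,x_0)/W_Λ(x_1))` of a path in the
`Λ`-Bruhat graph, computed in a field `F` via a linear embedding `emb`. -/
noncomputable def chainTerm {F : Type} [Field F] [Algebra ℚ F]
    (emb : D.V →ₗ[ℚ] F) (H : Subgroup D.W) (Lam : D.W → D.V) (w : D.W) :
    D.W → List D.W → F
  | _, [] => 1
  | t, x :: rest =>
      algebraMap ℚ F (D.coroot (D.edgeRoot H x t) (Lam x)) *
        (emb (D.act x (Lam x) - D.act w (Lam x)))⁻¹ *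
        chainTerm emb H Lam w x rest

/-- the Bruhat order on cosets: `aH ≤ bH` -/
def cosetLE (H : Subgroup D.W) (a b : D.W) : Prop :=
  ∃ x y, D.SameCoset H a x ∧ D.SameCoset H b y ∧ D.bruhatLE x y

/-- the (standard) parabolic subgroup generated by simple reflections in `J` -/
def parab (J : Set D.I) : Subgroup D.W := Subgroup.closure (D.s '' J)

/-- `X*(T)_P`: integral weights orthogonal to all coroots of `W_P`,
i.e. to `γ∨` for all positive roots `γ` in the span of the simple roots of `P` -/
def OrthWeightP (J : Set D.I) (lam : D.V) : Prop :=
  D.IsIntegral lam ∧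
    ∀ γ, D.IsPosRoot γ → γ ∈ Submodule.span ℚ (D.simple '' J) → D.coroot γ lam = 0

/-- an admissible function `Λ : [v,w]^P → X*(T)_P` -/
def Admissible (J : Set D.I) (v w : D.W) (Lam : D.W → D.V) : Prop :=
  (∀ x, D.IsMinRep (D.parab J) x → D.bruhatLE v x → D.bruhatLE x w →
      D.OrthWeightP J (Lam x)) ∧
  (∀ x, D.IsMinRep (D.parab J) x → D.bruhatLE v x → D.bruhatLE x w → x ≠ w →
      D.act x (Lam x) ≠ D.act w (Lam x))

/-- the subword of `l` with letters at the positions in `S`, in increasing order -/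
def subwordF (l : List D.I) (S : Finset (Fin l.length)) : List D.I :=
  ((List.finRange l.length).filter fun j => j ∈ S).map l.get

/-- `β_j = s_{i_1} ⋯ s_{i_{j-1}}(α_{i_j})` attached to a reduced word `l` -/
noncomputable def refRoot (l : List D.I) (j : Fin l.length) : D.V :=
  D.act (D.wordProd (l.take j.val)) (D.simple (l.get j))

/-- the Weyl group is simply laced: the Cartan pairing is symmetric -/
def SimplyLaced : Prop :=
  ∀ i j, D.coroot (D.simple i) (D.simple j) = D.coroot (D.simple j) (D.simple i)

/-- generating relation of the heap order of the word `l`: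
`p_j < p_k` whenever `j < k` and `s_{i_j}`, `s_{i_k}` do not commute -/
def heapCovers (l : List D.I) (j k : Fin l.length) : Prop :=
  (j : ℕ) < (k : ℕ) ∧ D.s (l.get j) * D.s (l.get k) ≠ D.s (l.get k) * D.s (l.get j)

/-- the heap order of the word `l`: the minimal partial order generated by
`heapCovers` -/
def heapLE (l : List D.I) : Fin l.length → Fin l.length → Prop :=
  Relation.ReflTransGen (D.heapCovers l)

/-- strict heap order -/
def heapLT (l : List D.I) (j k : Fin l.length) : Prop := D.heapLE l j k ∧ j ≠ k

/-- `F` is an order filter of the heap `H(w)` of the word `l` -/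
def IsHeapFilter (l : List D.I) (F : Finset (Fin l.length)) : Prop :=
  ∀ j k, j ∈ F → D.heapLE l j k → k ∈ F

/-- `i` and `j` are joined by an edge of the Dynkin diagram -/
def adjDynkin (i j : D.I) : Prop := i ≠ j ∧ D.s i * D.s j ≠ D.s j * D.s i

/-- an elementary excitation `A ▷ B` of subsets of the heap of the word `l` -/
def Excite (l : List D.I) (A B : Finset (Fin l.length)) : Prop :=
  ∃ p q, D.heapLT l p q ∧ l.get p = l.get q ∧ q ∈ A ∧ p ∈ B ∧
    A.erase q = B.erase p ∧
    (∀ z, D.heapLT l p z → D.heapLT l z q → l.get z ≠ l.get p) ∧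
    ∀ u ∈ A, D.heapLE l p u → D.heapLE l u q → ¬ D.adjDynkin (l.get p) (l.get u)

/-- `A` is an excited diagram of `F` in the heap of the word `l`,
i.e. `A ∈ E_{H(w)}(F)` -/
def InExcited (l : List D.I) (F A : Finset (Fin l.length)) : Prop :=
  Relation.ReflTransGen (D.Excite l) F A

end WeylSetting
namespace WeylSetting

variable {D : WeylSetting}

lemma act_mul (g h : D.W) (v : D.V) : D.act (g * h) v = D.act g (D.act h v) := by
  rw [map_mul]; rfl

lemma act_one (v : D.V) : D.act (1 : D.W) v = v := by rw [map_one]; rfl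

lemma act_inv_act (g : D.W) (v : D.V) : D.act g⁻¹ (D.act g v) = v := by
  rw [← act_mul, inv_mul_cancel, act_one]

lemma act_act_inv (g : D.W) (v : D.V) : D.act g (D.act g⁻¹ v) = v := by
  rw [← act_mul, mul_inv_cancel, act_one]

lemma eq_of_act_eq {a b : D.W} (h : ∀ v, D.act a v = D.act b v) : a = b := by
  have h1 : ∀ v, D.act (b⁻¹ * a) v = v := by
    intro v
    rw [act_mul, h, act_inv_act]
  have := D.act_faithful _ h1
  have : b * (b⁻¹ * a) = b * 1 := by rw [this]
  simpa [mul_assoc] using this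

lemma act_srefl (β : D.V) (hβ : β ∈ D.roots) (v : D.V) :
    D.act (D.srefl β) v = v - D.coroot β v • β := D.srefl_apply β hβ v

lemma srefl_sq (β : D.V) (hβ : β ∈ D.roots) : D.srefl β * D.srefl β = 1 := by
  apply eq_of_act_eq
  intro v
  rw [act_mul, act_srefl _ hβ, act_srefl _ hβ, act_one, map_sub, map_smul,
    D.coroot_self β hβ]
  simp only [smul_eq_mul, smul_smul]
  module

lemma srefl_inv (β : D.V) (hβ : β ∈ D.roots) : (D.srefl β)⁻¹ = D.srefl β := by
  rw [inv_eq_iff_mul_eq_one, srefl_sq β hβ]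

lemma coroot_neg (β : D.V) (hβ : β ∈ D.roots) (v : D.V) :
    D.coroot (-β) v = - D.coroot β v := by
  have h1 := D.coroot_equivariant (D.srefl β) β hβ v
  have h2 : D.act (D.srefl β) β = -β := by
    rw [act_srefl _ hβ, D.coroot_self _ hβ]; module
  rw [h2, act_srefl _ hβ, map_sub, map_smul] at h1
  have h3 : D.coroot (-β) β = -2 := by
    have := D.coroot_self (-β) (D.roots_neg β hβ)
    have h4 : D.coroot (-β) (-β) = - D.coroot (-β) β := by rw [map_neg]
    rw [this] at h4; linarith
  rw [h3] at h1
  simp only [smul_eq_mul] at h1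
  linarith

lemma srefl_neg (β : D.V) (hβ : β ∈ D.roots) : D.srefl (-β) = D.srefl β := by
  apply eq_of_act_eq
  intro v
  rw [act_srefl _ (D.roots_neg β hβ), act_srefl _ hβ, coroot_neg β hβ]
  module

lemma coroot_act (g : D.W) (β : D.V) (hβ : β ∈ D.roots) (v : D.V) :
    D.coroot (D.act g β) v = D.coroot β (D.act g⁻¹ v) := by
  have := D.coroot_equivariant g β hβ (D.act g⁻¹ v)
  rwa [act_act_inv] at this

lemma srefl_conj (g : D.W) (β : D.V) (hβ : β ∈ D.roots) :
    g * D.srefl β * g⁻¹ = D.srefl (D.act g β) := by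
  apply eq_of_act_eq
  intro v
  rw [act_srefl _ (D.roots_invariant g β hβ), act_mul, act_mul,
    act_srefl _ hβ, map_sub, map_smul, coroot_act g β hβ, act_act_inv]

/-! word and length basics -/

lemma wordProd_nil : D.wordProd ([] : List D.I) = 1 := rfl

lemma wordProd_cons (i : D.I) (l : List D.I) :
    D.wordProd (i :: l) = D.s i * D.wordProd l := by
  simp [wordProd]

lemma wordProd_append (l₁ l₂ : List D.I) :
    D.wordProd (l₁ ++ l₂) = D.wordProd l₁ * D.wordProd l₂ := by
  simp [wordProd]

lemma s_mem_roots (i : D.I) : D.simple i ∈ D.roots := D.simple_mem i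

lemma s_sq (i : D.I) : D.s i * D.s i = 1 := srefl_sq _ (D.simple_mem i)

lemma s_inv (i : D.I) : (D.s i)⁻¹ = D.s i := srefl_inv _ (D.simple_mem i)

lemma exists_word (g : D.W) : ∃ l : List D.I, D.wordProd l = g := by
  obtain ⟨l, hl⟩ := D.generated g
  exact ⟨l, hl.symm⟩

lemma length_le_of_word {l : List D.I} {g : D.W} (h : D.wordProd l = g) :
    D.length g ≤ l.length := Nat.sInf_le ⟨l, rfl, h⟩

lemma exists_reduced (g : D.W) : ∃ l : List D.I, D.IsReduced l g := by
  obtain ⟨l, hl⟩ := exists_word g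
  have hne : {n | ∃ l : List D.I, l.length = n ∧ D.wordProd l = g}.Nonempty :=
    ⟨l.length, l, rfl, hl⟩
  obtain ⟨l', hl', hp⟩ := Nat.sInf_mem hne
  exact ⟨l', hp, hl'⟩

lemma length_one : D.length (1 : D.W) = 0 :=
  Nat.le_zero.mp (length_le_of_word (l := []) rfl)

lemma eq_one_of_length_zero {g : D.W} (h : D.length g = 0) : g = 1 := by
  obtain ⟨l, hp, hl⟩ := exists_reduced g
  rw [h, List.length_eq_zero_iff] at hl
  rw [hl] at hp
  exact hp.symm ▸ rfl

lemma length_s_mul_le (i : D.I) (g : D.W) :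
    D.length (D.s i * g) ≤ D.length g + 1 := by
  obtain ⟨l, hp, hl⟩ := exists_reduced g
  have : D.wordProd (i :: l) = D.s i * g := by rw [wordProd_cons, hp]
  simpa [hl] using length_le_of_word this

lemma length_s_mul_ge (i : D.I) (g : D.W) :
    D.length g ≤ D.length (D.s i * g) + 1 := by
  have := length_s_mul_le (D := D) i (D.s i * g)
  rwa [← mul_assoc, s_sq, one_mul] at this

end WeylSetting
namespace WeylSetting

variable {D : WeylSetting}

lemma root_ne_zero {β : D.V} (hβ : β ∈ D.roots) : β ≠ 0 := by
  intro h
  have := D.coroot_self β hβ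
  rw [h, map_zero] at this
  norm_num at this

lemma coeff_eq {c d : D.I → ℚ}
    (h : ∑ i, c i • D.simple i = ∑ i, d i • D.simple i) : c = d := by
  have h2 : ∑ i, (c i - d i) • D.simple i = 0 := by
    simp only [sub_smul, Finset.sum_sub_distrib, h, sub_self]
  have h3 := Fintype.linearIndependent_iff.mp D.simple_indep _ h2
  funext i
  have := h3 i
  linarith

lemma isPosRoot_or_neg {β : D.V} (hβ : β ∈ D.roots) :
    D.IsPosRoot β ∨ D.IsPosRoot (-β) := by
  rcases D.root_pos_or_neg β hβ with h | h
  · exact Or.inl ⟨hβ, h⟩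
  · exact Or.inr ⟨D.roots_neg β hβ, h⟩

lemma not_isPosRoot_both {β : D.V} (h1 : D.IsPosRoot β) (h2 : D.IsPosRoot (-β)) :
    False := by
  obtain ⟨hβ, c, hc, hcs⟩ := h1
  obtain ⟨hβ', d, hd, hds⟩ := h2
  have hsum : ∑ i, (c i + d i) • D.simple i = ∑ i, (0 : ℚ) • D.simple i := by
    simp only [add_smul, Finset.sum_add_distrib, ← hcs, ← hds, zero_smul,
      Finset.sum_const_zero, add_neg_cancel]
  have := coeff_eq hsum
  have hc0 : ∀ i, c i = 0 := by
    intro i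
    have h0 : c i + d i = 0 := congrFun this i
    have := hc i; have := hd i; linarith
  apply root_ne_zero hβ
  rw [hcs]
  simp [hc0]

lemma isPosRoot_neg_of_not {β : D.V} (hβ : β ∈ D.roots) (h : ¬ D.IsPosRoot β) :
    D.IsPosRoot (-β) := (isPosRoot_or_neg hβ).resolve_left h

lemma posRoot_repr {β : D.V} (h : D.IsPosRoot β) :
    β = ∑ j, (D.posCoeff β j : ℚ) • D.simple j := D.posCoeff_spec β h.1 h.2

/-- if `β > 0` and `s_i β < 0` then `β` is a (positive integer) multiple of `αᵢ` -/
lemma multiple_of_reflect_neg {β : D.V} (hβ : D.IsPosRoot β) (i : D.I)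
    (h : ¬ D.IsPosRoot (D.act (D.s i) β)) :
    ∃ n : ℕ, 0 < n ∧ β = (n : ℚ) • D.simple i := by
  have hγr : D.act (D.s i) β ∈ D.roots := D.roots_invariant _ β hβ.1
  have hγ : D.IsPosRoot (-(D.act (D.s i) β)) := isPosRoot_neg_of_not hγr h
  obtain ⟨_, e, he, hes⟩ := hγ
  have hγ2 : D.act (D.s i) β = β - D.coroot (D.simple i) β • D.simple i :=
    act_srefl _ (D.simple_mem i) β
  set c : D.I → ℚ := fun j => (D.posCoeff β j : ℚ) with hc
  have hrep := posRoot_repr hβ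
  have key : ∑ j, (e j + c j) • D.simple j
      = ∑ j, (if j = i then D.coroot (D.simple i) β else 0) • D.simple j := by
    have : ∑ j, (if j = i then D.coroot (D.simple i) β else 0) • D.simple j
        = D.coroot (D.simple i) β • D.simple i := by
      rw [Finset.sum_eq_single i]
      · simp
      · intro b _ hb; simp [hb]
      · intro hi; exact absurd (Finset.mem_univ i) hi
    have hleft : ∑ j, (e j + c j) • D.simple j = -(D.act (D.s i) β) + β := by
      simp only [add_smul, Finset.sum_add_distrib, ← hes]
      congr 1
      exact hrep.symm
    rw [hleft, hγ2, this]
    abel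
  have hco := congrFun (coeff_eq key)
  have hcz : ∀ j, j ≠ i → c j = 0 := by
    intro j hj
    have h1 := hco j
    simp only [hj, if_false] at h1
    have h2 := he j
    have h3 : (0:ℚ) ≤ c j := by simp [hc]
    linarith
  have hβi : β = c i • D.simple i := by
    rw [hrep]
    exact Finset.sum_eq_single_of_mem i (Finset.mem_univ i)
      (fun b _ hb => by rw [show ((D.posCoeff β b : ℚ)) = c b from rfl, hcz b hb, zero_smul])
  refine ⟨D.posCoeff β i, ?_, hβi⟩
  by_contra hn
  push_neg at hn
  have hn0 : D.posCoeff β i = 0 := Nat.le_zero.mp hn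
  apply root_ne_zero hβ.1
  rw [hβi]
  simp [hc, hn0]

end WeylSetting
namespace WeylSetting

variable {D : WeylSetting}

lemma act_s (i : D.I) (v : D.V) :
    D.act (D.s i) v = v - D.coroot (D.simple i) v • D.simple i :=
  D.srefl_apply (D.simple i) (D.simple_mem i) v

lemma sum_single_smul (i : D.I) (a : ℚ) :
    ∑ j, (if j = i then a else 0) • D.simple j = a • D.simple i := by
  rw [Finset.sum_eq_single_of_mem i (Finset.mem_univ i)]
  · simp
  · intro b _ hb; simp [hb]

/-- the span of the coroots of the simple roots -/
noncomputable def corootSpan (D : WeylSetting) : Submodule ℚ (D.V →ₗ[ℚ] ℚ) :=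
  Submodule.span ℚ (Set.range fun i => D.coroot (D.simple i))

/-- structure of the action of any Weyl group element -/
lemma act_decomp (g : D.W) : ∃ ρ : D.I → (D.V →ₗ[ℚ] ℚ),
    (∀ j, ρ j ∈ D.corootSpan) ∧
    ∀ v, D.act g v = v + ∑ j, ρ j v • D.simple j := by
  obtain ⟨l, hl⟩ := exists_word g
  subst hl
  induction l with
  | nil => exact ⟨0, fun j => Submodule.zero_mem _, fun v => by simp [wordProd_nil, act_one]⟩
  | cons i l ih =>
    obtain ⟨ρ, hρ, hv⟩ := ih
    refine ⟨fun j => ρ j - (if j = i then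
        (D.coroot (D.simple i) + ∑ k, D.coroot (D.simple i) (D.simple k) • ρ k) else 0),
      ?_, ?_⟩
    · intro j
      refine Submodule.sub_mem _ (hρ j) ?_
      by_cases hj : j = i
      · simp only [hj, if_true]
        refine Submodule.add_mem _ (Submodule.subset_span ⟨i, rfl⟩) ?_
        exact Submodule.sum_mem _ fun k _ => Submodule.smul_mem _ _ (hρ k)
      · simp [hj]
    · intro v
      rw [wordProd_cons, act_mul, act_s, hv v]
      have hphi : D.coroot (D.simple i) (v + ∑ j, ρ j v • D.simple j)
          = D.coroot (D.simple i) v + ∑ k, ρ k v * D.coroot (D.simple i) (D.simple k) := by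
        rw [map_add, map_sum]
        simp [mul_comm]
      rw [hphi]
      have hsplit : ∑ j, (ρ j - (if j = i then
          (D.coroot (D.simple i) + ∑ k, D.coroot (D.simple i) (D.simple k) • ρ k) else 0)) v • D.simple j
          = (∑ j, ρ j v • D.simple j)
            - (D.coroot (D.simple i) v + ∑ k, ρ k v * D.coroot (D.simple i) (D.simple k)) • D.simple i := by
        simp only [LinearMap.sub_apply, sub_smul, Finset.sum_sub_distrib]
        congr 1
        have : ∀ j, ((if j = i then
            (D.coroot (D.simple i) + ∑ k, D.coroot (D.simple i) (D.simple k) • ρ k) else 0) : D.V →ₗ[ℚ] ℚ) v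
            = (if j = i then (D.coroot (D.simple i) v + ∑ k, ρ k v * D.coroot (D.simple i) (D.simple k)) else 0) := by
          intro j
          by_cases hj : j = i <;> simp [hj, mul_comm]
        simp only [this]
        rw [sum_single_smul]
      rw [hsplit]
      abel

/-- the span of the simple roots -/
noncomputable def E (D : WeylSetting) : Submodule ℚ D.V :=
  Submodule.span ℚ (Set.range D.simple)

lemma simple_mem_E (i : D.I) : D.simple i ∈ D.E :=
  Submodule.subset_span ⟨i, rfl⟩

lemma posRoot_mem_E {β : D.V} (h : D.IsPosRoot β) : β ∈ D.E := by
  rw [posRoot_repr h]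
  exact Submodule.sum_mem _ fun j _ => Submodule.smul_mem _ _ (simple_mem_E j)

lemma root_mem_E {β : D.V} (hβ : β ∈ D.roots) : β ∈ D.E := by
  rcases isPosRoot_or_neg hβ with h | h
  · exact posRoot_mem_E h
  · have := posRoot_mem_E h
    simpa using D.E.neg_mem this

lemma act_mem_E {v : D.V} (g : D.W) (hv : v ∈ D.E) : D.act g v ∈ D.E := by
  obtain ⟨ρ, _, hρ⟩ := act_decomp g
  rw [hρ v]
  exact D.E.add_mem hv (Submodule.sum_mem _ fun j _ => Submodule.smul_mem _ _ (simple_mem_E j))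

lemma act_sub_mem_E (g : D.W) (v : D.V) : D.act g v - v ∈ D.E := by
  obtain ⟨ρ, _, hρ⟩ := act_decomp g
  rw [hρ v]
  have : v + (∑ j, ρ j v • D.simple j) - v = ∑ j, ρ j v • D.simple j := by abel
  rw [this]
  exact Submodule.sum_mem _ fun j _ => Submodule.smul_mem _ _ (simple_mem_E j)

/-- basis of `E` given by the simple roots -/
noncomputable def bE (D : WeylSetting) : Module.Basis D.I ℚ D.E :=
  Module.Basis.span D.simple_indep

lemma bE_apply (i : D.I) : (D.bE i : D.V) = D.simple i :=
  congrArg Subtype.val (Module.Basis.span_apply D.simple_indep i)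

/-- a complement to `E` -/
noncomputable def Ecompl (D : WeylSetting) : Submodule ℚ D.V :=
  (Submodule.exists_isCompl D.E).choose

lemma isCompl_E (D : WeylSetting) : IsCompl D.E D.Ecompl :=
  (Submodule.exists_isCompl D.E).choose_spec

/-- projection onto `E` -/
noncomputable def projE (D : WeylSetting) : D.V →ₗ[ℚ] D.E :=
  Submodule.linearProjOfIsCompl D.E D.Ecompl D.isCompl_E

lemma projE_apply {v : D.V} (hv : v ∈ D.E) : D.projE v = ⟨v, hv⟩ :=
  Submodule.linearProjOfIsCompl_apply_left D.isCompl_E ⟨v, hv⟩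

/-- the height functional: `1` on every simple root -/
noncomputable def htF (D : WeylSetting) : D.V →ₗ[ℚ] ℚ :=
  (D.bE.constr ℚ (fun _ => (1:ℚ))).comp D.projE

lemma htF_simple (i : D.I) : D.htF (D.simple i) = 1 := by
  have h1 : D.projE (D.simple i) = D.bE i := by
    rw [projE_apply (simple_mem_E i)]
    apply Subtype.ext
    rw [bE_apply]
  simp only [htF, LinearMap.comp_apply, h1]
  rw [Module.Basis.constr_basis]

lemma htF_posRoot_pos {β : D.V} (h : D.IsPosRoot β) : 1 ≤ D.htF β := by
  rw [posRoot_repr h, map_sum]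
  have hterm : ∀ j, D.htF ((D.posCoeff β j : ℚ) • D.simple j) = (D.posCoeff β j : ℚ) := by
    intro j; rw [map_smul, htF_simple]; simp
  simp only [hterm]
  by_contra hlt
  push_neg at hlt
  have hnat : ∀ j, (0:ℚ) ≤ (D.posCoeff β j : ℚ) := fun j => by positivity
  have hall : ∀ j, D.posCoeff β j = 0 := by
    intro j
    by_contra hj
    have h1 : (1:ℚ) ≤ (D.posCoeff β j : ℚ) := by
      have := Nat.one_le_iff_ne_zero.mpr hj
      exact_mod_cast this
    have h2 : (1:ℚ) ≤ ∑ k, (D.posCoeff β k : ℚ) := by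
      calc (1:ℚ) ≤ (D.posCoeff β j : ℚ) := h1
      _ ≤ ∑ k, (D.posCoeff β k : ℚ) :=
        Finset.single_le_sum (fun k _ => hnat k) (Finset.mem_univ j)
    linarith
  apply root_ne_zero h.1
  rw [posRoot_repr h]
  apply Finset.sum_eq_zero
  intro j _
  rw [hall j]; simp

end WeylSetting
namespace WeylSetting

variable {D : WeylSetting}

/-- the action restricted to `E` -/
noncomputable def actE (D : WeylSetting) (g : D.W) : D.E →ₗ[ℚ] D.E :=
  ((D.act g).toLinearMap).restrict (fun _ hv => act_mem_E g hv)

lemma actE_val (g : D.W) (u : D.E) : (D.actE g u : D.V) = D.act g u := rfl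

lemma actE_one : D.actE 1 = LinearMap.id := by
  apply LinearMap.ext
  intro u
  apply Subtype.ext
  simp [actE_val, act_one]

lemma actE_mul (g h : D.W) : D.actE (g * h) = (D.actE g).comp (D.actE h) := by
  apply LinearMap.ext
  intro u
  apply Subtype.ext
  exact act_mul g h (u : D.V)

lemma actE_inv_cancel (g : D.W) (u : D.E) : D.actE g (D.actE g⁻¹ u) = u := by
  apply Subtype.ext
  exact act_act_inv g (u : D.V)

lemma actE_cancel_inv (g : D.W) (u : D.E) : D.actE g⁻¹ (D.actE g u) = u := by
  apply Subtype.ext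
  exact act_inv_act g (u : D.V)

/-- restricted Weyl group elements, as a (finite) type -/
def Gamma (D : WeylSetting) : Type :=
  {f : D.E →ₗ[ℚ] D.E // ∃ g : D.W, f = D.actE g}

lemma gamma_root_mem (f : D.Gamma) (β : {x // x ∈ D.roots}) :
    ((f.1 ⟨β.1, root_mem_E β.2⟩ : D.E) : D.V) ∈ D.roots := by
  obtain ⟨g, hg⟩ := f.2
  rw [hg]
  exact D.roots_invariant g β.1 β.2

/-- a restricted Weyl group element as a function on roots -/
noncomputable def gammaToRoots (f : D.Gamma) : {x // x ∈ D.roots} → {x // x ∈ D.roots} :=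
  fun β => ⟨_, gamma_root_mem f β⟩

lemma gammaToRoots_inj : Function.Injective (gammaToRoots (D := D)) := by
  intro f f' h
  apply Subtype.ext
  apply D.bE.ext
  intro i
  have hb : (D.bE i) = ⟨D.simple i, root_mem_E (D.simple_mem i)⟩ :=
    Subtype.ext (bE_apply i)
  have h2 := congrFun h ⟨D.simple i, D.simple_mem i⟩
  have h3 := congrArg Subtype.val h2
  rw [hb]
  exact Subtype.ext h3

noncomputable instance (D : WeylSetting) : Fintype D.Gamma := by
  have : Finite D.Gamma := Finite.of_injective _ (gammaToRoots_inj (D := D))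
  exact Fintype.ofFinite _

/-- auxiliary positive definite form on `E` -/
noncomputable def Q0 (D : WeylSetting) (u v : D.E) : ℚ :=
  ∑ i, D.bE.repr u i * D.bE.repr v i

lemma Q0_symm (u v : D.E) : D.Q0 u v = D.Q0 v u := by
  simp [Q0, mul_comm]

lemma Q0_add_left (u u' v : D.E) : D.Q0 (u + u') v = D.Q0 u v + D.Q0 u' v := by
  simp [Q0, map_add, add_mul, Finset.sum_add_distrib]

lemma Q0_smul_left (a : ℚ) (u v : D.E) : D.Q0 (a • u) v = a * D.Q0 u v := by
  simp [Q0, map_smul, Finset.mul_sum, mul_assoc]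

lemma Q0_nonneg (u : D.E) : 0 ≤ D.Q0 u u :=
  Finset.sum_nonneg fun i _ => mul_self_nonneg _

lemma Q0_pos {u : D.E} (hu : u ≠ 0) : 0 < D.Q0 u u := by
  have hr : D.bE.repr u ≠ 0 := by
    intro h
    apply hu
    exact D.bE.repr.injective (show D.bE.repr u = D.bE.repr 0 by simp [h])
  obtain ⟨i, hi⟩ := Finsupp.ne_iff.mp hr
  simp only [Finsupp.coe_zero, Pi.zero_apply] at hi
  apply Finset.sum_pos' (fun j _ => mul_self_nonneg _)
  exact ⟨i, Finset.mem_univ i, mul_self_pos.mpr hi⟩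

/-- the invariant positive definite form on `E` -/
noncomputable def BF (D : WeylSetting) (u v : D.E) : ℚ :=
  ∑ γ : D.Gamma, D.Q0 (γ.1 u) (γ.1 v)

lemma BF_symm (u v : D.E) : D.BF u v = D.BF v u := by
  simp [BF, Q0_symm]

lemma BF_add_left (u u' v : D.E) : D.BF (u + u') v = D.BF u v + D.BF u' v := by
  simp [BF, map_add, Q0_add_left, Finset.sum_add_distrib]

lemma BF_smul_left (a : ℚ) (u v : D.E) : D.BF (a • u) v = a * D.BF u v := by
  simp [BF, map_smul, Q0_smul_left, Finset.mul_sum]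

lemma BF_add_right (u v v' : D.E) : D.BF u (v + v') = D.BF u v + D.BF u v' := by
  rw [BF_symm, BF_add_left, BF_symm v u, BF_symm v' u]

lemma BF_smul_right (a : ℚ) (u v : D.E) : D.BF u (a • v) = a * D.BF u v := by
  rw [BF_symm, BF_smul_left, BF_symm]

/-- the `E`-form as a bilinear map -/
noncomputable def BF2 (D : WeylSetting) : D.E →ₗ[ℚ] D.E →ₗ[ℚ] ℚ :=
  LinearMap.mk₂ ℚ D.BF BF_add_left BF_smul_left BF_add_right BF_smul_right

lemma BF2_apply (u v : D.E) : D.BF2 u v = D.BF u v := rfl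

/-- the identity element of `Gamma` -/
noncomputable def idGamma (D : WeylSetting) : D.Gamma := ⟨LinearMap.id, 1, actE_one.symm⟩

lemma BF_pos {u : D.E} (hu : u ≠ 0) : 0 < D.BF u u := by
  have hle : D.Q0 (D.idGamma.1 u) (D.idGamma.1 u) ≤ D.BF u u :=
    Finset.single_le_sum (f := fun γ : D.Gamma => D.Q0 (γ.1 u) (γ.1 u))
      (fun γ _ => Q0_nonneg _) (Finset.mem_univ D.idGamma)
  have : 0 < D.Q0 (D.idGamma.1 u) (D.idGamma.1 u) := Q0_pos (by simpa [idGamma] using hu)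
  linarith

/-- reindexing equivalence of `Gamma` by right composition -/
noncomputable def gammaMulEquiv (g : D.W) : D.Gamma ≃ D.Gamma where
  toFun γ := ⟨γ.1.comp (D.actE g), by
    obtain ⟨h, hh⟩ := γ.2; exact ⟨h * g, by rw [hh, actE_mul]⟩⟩
  invFun γ := ⟨γ.1.comp (D.actE g⁻¹), by
    obtain ⟨h, hh⟩ := γ.2; exact ⟨h * g⁻¹, by rw [hh, actE_mul]⟩⟩
  left_inv γ := by
    apply Subtype.ext
    apply LinearMap.ext
    intro u
    simp [LinearMap.comp_apply, actE_inv_cancel]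
  right_inv γ := by
    apply Subtype.ext
    apply LinearMap.ext
    intro u
    simp [LinearMap.comp_apply, actE_cancel_inv]

lemma BF_invariant (g : D.W) (u v : D.E) :
    D.BF (D.actE g u) (D.actE g v) = D.BF u v := by
  rw [BF, BF]
  apply Fintype.sum_equiv (gammaMulEquiv g)
  intro γ
  rfl

/-- a root as an element of `E` -/
def rt {β : D.V} (hβ : β ∈ D.roots) : D.E := ⟨β, root_mem_E hβ⟩

lemma rt_ne_zero {β : D.V} (hβ : β ∈ D.roots) : rt hβ ≠ 0 := by
  intro h
  exact root_ne_zero hβ (congrArg Subtype.val h)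

lemma BF_rt_pos {β : D.V} (hβ : β ∈ D.roots) : 0 < D.BF (rt hβ) (rt hβ) :=
  BF_pos (rt_ne_zero hβ)

/-- the fundamental formula : `⟨u, β∨⟩ B(β,β) = 2 B(u,β)` -/
lemma coroot_BF {β : D.V} (hβ : β ∈ D.roots) (u : D.E) :
    D.coroot β (u : D.V) * D.BF (rt hβ) (rt hβ) = 2 * D.BF u (rt hβ) := by
  have hact : ∀ x : D.E, D.actE (D.srefl β) x = x - D.coroot β (x : D.V) • rt hβ := by
    intro x
    apply Subtype.ext
    simp only [actE_val, act_srefl _ hβ]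
    rfl
  have hinv := BF_invariant (D := D) (D.srefl β) u (rt hβ)
  rw [hact u, hact (rt hβ)] at hinv
  have hco : D.coroot β ((rt hβ : D.E) : D.V) = 2 := D.coroot_self β hβ
  rw [hco] at hinv
  have hneg : rt hβ - (2:ℚ) • rt hβ = -rt hβ := by module
  rw [hneg] at hinv
  have e1 : D.BF (u - D.coroot β (u : D.V) • rt hβ) (-rt hβ)
      = -(D.BF u (rt hβ)) + D.coroot β (u : D.V) * D.BF (rt hβ) (rt hβ) := by
    have hs : u - D.coroot β (u : D.V) • rt hβ = u + (-(D.coroot β (u : D.V))) • rt hβ := by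
      module
    have hn : (-rt hβ) = (-1 : ℚ) • rt hβ := by module
    rw [hs, hn, BF_add_left, BF_smul_left, BF_smul_right, BF_smul_right]
    ring
  rw [e1] at hinv
  linarith

end WeylSetting
namespace WeylSetting

variable {D : WeylSetting}

lemma rt_bE (i : D.I) : rt (D.simple_mem i) = D.bE i :=
  Subtype.ext (bE_apply i).symm

lemma BF_bE (k j : D.I) :
    D.BF (D.bE k) (D.bE j) = D.coroot (D.simple j) (D.simple k)
      * D.BF (D.bE j) (D.bE j) / 2 := by
  have h := coroot_BF (D := D) (D.simple_mem j) (D.bE k)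
  rw [rt_bE, bE_apply] at h
  linarith

lemma span_phi_vanish {μ : D.V →ₗ[ℚ] ℚ} (hμ : μ ∈ D.corootSpan)
    (h0 : ∀ k, μ (D.simple k) = 0) : μ = 0 := by
  obtain ⟨e, he⟩ := (Submodule.mem_span_range_iff_exists_fun ℚ).mp hμ
  set Bj : D.I → ℚ := fun j => D.BF (D.bE j) (D.bE j) with hBj
  have hBjpos : ∀ j, 0 < Bj j := by
    intro j
    have := BF_rt_pos (D.simple_mem j)
    rwa [rt_bE] at this
  set x : D.E := ∑ j, (e j / Bj j) • D.bE j with hx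
  have happ : ∀ k, μ (D.simple k) = ∑ j, e j * D.coroot (D.simple j) (D.simple k) := by
    intro k
    rw [← he]
    simp [LinearMap.sum_apply, LinearMap.smul_apply, smul_eq_mul]
  have hBkx : ∀ k, D.BF (D.bE k) x = 0 := by
    intro k
    have h1 : D.BF (D.bE k) x = ∑ j, (e j / Bj j) * D.BF (D.bE k) (D.bE j) := by
      rw [show D.BF (D.bE k) x = D.BF2 (D.bE k) x from rfl, hx, map_sum]
      apply Finset.sum_congr rfl
      intro j _
      rw [map_smul, smul_eq_mul]
      rfl
    rw [h1]
    have h2 : ∀ j, (e j / Bj j) * D.BF (D.bE k) (D.bE j)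
        = e j * D.coroot (D.simple j) (D.simple k) / 2 := by
      intro j
      have hBne : D.BF (D.bE j) (D.bE j) ≠ 0 := by
        have := hBjpos j
        simp only [hBj] at this
        exact ne_of_gt this
      rw [BF_bE]
      simp only [hBj]
      field_simp
    simp only [h2]
    rw [← Finset.sum_div]
    rw [← happ k, h0 k]
    norm_num
  have hxx : D.BF x x = 0 := by
    have h1 : D.BF x x = ∑ j, (e j / Bj j) * D.BF (D.bE j) x := by
      rw [show D.BF x x = D.BF2 x x from rfl, hx, map_sum]
      apply Finset.sum_congr rfl
      intro j _
      rw [map_smul, smul_eq_mul,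
        show (D.BF2 (∑ k, (e k / Bj k) • D.bE k)) (D.bE j)
          = D.BF (∑ k, (e k / Bj k) • D.bE k) (D.bE j) from rfl,
        BF_symm, ← hx]
    rw [h1]
    apply Finset.sum_eq_zero
    intro j _
    rw [hBkx j, mul_zero]
  have hx0 : x = 0 := by
    by_contra h
    exact absurd hxx (ne_of_gt (BF_pos h))
  have hcoord : ∀ j, e j / Bj j = 0 := by
    intro j
    have := congrFun (D.bE.repr_sum_self (fun j => e j / Bj j)) j
    rw [← hx, hx0] at this
    simp at this
    exact this.symm ▸ rfl
  have he0 : ∀ j, e j = 0 := by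
    intro j
    have := hcoord j
    have hb := hBjpos j
    field_simp at this
    simpa using this
  rw [← he]
  apply Finset.sum_eq_zero
  intro j _
  rw [he0 j, zero_smul]

/-- signed simple-root coefficients of an arbitrary root -/
lemma root_coeffs {β : D.V} (hβ : β ∈ D.roots) :
    ∃ c : D.I → ℚ, β = ∑ j, c j • D.simple j := by
  rcases isPosRoot_or_neg hβ with h | h
  · exact ⟨_, posRoot_repr h⟩
  · refine ⟨fun j => -(D.posCoeff (-β) j : ℚ), ?_⟩
    have h1 := posRoot_repr h
    have h3 : -∑ j, (D.posCoeff (-β) j : ℚ) • D.simple j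
        = ∑ j, (-(D.posCoeff (-β) j : ℚ)) • D.simple j := by
      rw [← Finset.sum_neg_distrib]
      congr 1
      funext j
      rw [neg_smul]
    calc β = -(-β) := (neg_neg β).symm
    _ = -∑ j, (D.posCoeff (-β) j : ℚ) • D.simple j := by rw [← h1]
    _ = _ := h3

lemma coroot_mem_span {β : D.V} (hβ : β ∈ D.roots) : D.coroot β ∈ D.corootSpan := by
  obtain ⟨c, hc⟩ := root_coeffs hβ
  obtain ⟨ρ, hρ, hv⟩ := act_decomp (D.srefl β)
  have hvs : ∀ v j, ρ j v = -(D.coroot β v * c j) := by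
    intro v j
    have h1 : v - D.coroot β v • β = v + ∑ j, ρ j v • D.simple j := by
      rw [← hv v, act_srefl _ hβ]
    have h2 : ∑ j, (ρ j v + D.coroot β v * c j) • D.simple j = ∑ j, (0:ℚ) • D.simple j := by
      simp only [add_smul, Finset.sum_add_distrib, zero_smul, Finset.sum_const_zero]
      have h3 : ∑ j, (D.coroot β v * c j) • D.simple j = D.coroot β v • β := by
        rw [hc, Finset.smul_sum]
        congr 1
        funext j
        rw [smul_smul]
      rw [h3]
      have := h1
      abel_nf at this ⊢
      linear_combination (norm := abel) this.symm
    have h4 := congrFun (coeff_eq h2) j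
    linarith
  have hne : ∃ j, c j ≠ 0 := by
    by_contra h
    push_neg at h
    apply root_ne_zero hβ
    rw [hc]
    apply Finset.sum_eq_zero
    intro j _
    rw [h j, zero_smul]
  obtain ⟨j0, hj0⟩ := hne
  have heq : D.coroot β = (-(c j0)⁻¹) • ρ j0 := by
    apply LinearMap.ext
    intro v
    rw [LinearMap.smul_apply, hvs v j0]
    simp only [smul_eq_mul]
    field_simp
  rw [heq]
  exact Submodule.smul_mem _ _ (hρ j0)

end WeylSetting
namespace WeylSetting

variable {D : WeylSetting}

lemma rt_val {β : D.V} (hβ : β ∈ D.roots) : ((rt hβ : D.E) : D.V) = β := rfl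

lemma rt_sum_pos {β : D.V} (h : D.IsPosRoot β) :
    (rt h.1 : D.E) = ∑ j, (D.posCoeff β j : ℚ) • D.bE j := by
  apply Subtype.ext
  rw [rt_val]
  have : ((∑ j, (D.posCoeff β j : ℚ) • D.bE j : D.E) : D.V)
      = ∑ j, (D.posCoeff β j : ℚ) • D.simple j := by
    rw [AddSubmonoidClass.coe_finset_sum]
    apply Finset.sum_congr rfl
    intro j _
    rw [SetLike.val_smul, bE_apply]
  rw [this]
  exact posRoot_repr h

/-- the coroot of a positive root is a nonnegative combination of simple coroots -/
lemma corootRepr {β : D.V} (h : D.IsPosRoot β) :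
    ∃ c : D.I → ℚ, (∀ j, 0 ≤ c j) ∧
      D.coroot β = ∑ j, c j • D.coroot (D.simple j) := by
  have hBβpos : 0 < D.BF (rt h.1) (rt h.1) := BF_rt_pos h.1
  have hBjpos : ∀ j, 0 < D.BF (D.bE j) (D.bE j) := by
    intro j
    have := BF_rt_pos (D.simple_mem j)
    rwa [rt_bE] at this
  set c : D.I → ℚ := fun j =>
    (D.posCoeff β j : ℚ) * D.BF (D.bE j) (D.bE j) / D.BF (rt h.1) (rt h.1) with hc
  have hcnn : ∀ j, 0 ≤ c j := by
    intro j
    have h1 : (0:ℚ) ≤ (D.posCoeff β j : ℚ) := Nat.cast_nonneg _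
    have h2 := hBjpos j
    rw [hc]
    positivity
  refine ⟨c, hcnn, ?_⟩
  have key : D.coroot β - ∑ j, c j • D.coroot (D.simple j) = 0 := by
    apply span_phi_vanish
    · exact Submodule.sub_mem _ (coroot_mem_span h.1)
        (Submodule.sum_mem _ fun j _ => Submodule.smul_mem _ _
          (Submodule.subset_span ⟨j, rfl⟩))
    · intro k
      have h1 := coroot_BF (D := D) h.1 (D.bE k)
      rw [bE_apply] at h1
      have h2 : ∀ j, D.coroot (D.simple j) (D.simple k)
          = 2 * D.BF (D.bE k) (D.bE j) / D.BF (D.bE j) (D.bE j) := by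
        intro j
        have hf := coroot_BF (D := D) (D.simple_mem j) (D.bE k)
        rw [bE_apply, rt_bE] at hf
        have hBne : D.BF (D.bE j) (D.bE j) ≠ 0 := ne_of_gt (hBjpos j)
        rw [eq_div_iff hBne]
        linarith
      have h3 : D.BF (D.bE k) (rt h.1) = ∑ j, (D.posCoeff β j : ℚ) * D.BF (D.bE k) (D.bE j) := by
        rw [show D.BF (D.bE k) (rt h.1) = D.BF2 (D.bE k) (rt h.1) from rfl,
          rt_sum_pos h, map_sum]
        apply Finset.sum_congr rfl
        intro j _
        rw [map_smul, smul_eq_mul]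
        rfl
      have h4 : (∑ j, c j • D.coroot (D.simple j)) (D.simple k)
          = ∑ j, c j * D.coroot (D.simple j) (D.simple k) := by
        simp [LinearMap.sum_apply, smul_eq_mul]
      rw [LinearMap.sub_apply, h4]
      have h5 : ∀ j, c j * D.coroot (D.simple j) (D.simple k)
          = 2 * ((D.posCoeff β j : ℚ) * D.BF (D.bE k) (D.bE j)) / D.BF (rt h.1) (rt h.1) := by
        intro j
        rw [hc, h2 j]
        have hBj := hBjpos j
        field_simp
      simp only [h5]
      rw [← Finset.sum_div, ← Finset.mul_sum, ← h3]
      have hBβ := hBβpos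
      field_simp
      linarith [h1]
  have := sub_eq_zero.mp key
  exact this

/-- dominance : a dominant weight pairs nonnegatively with every positive coroot -/
lemma coroot_dominant_nonneg {pi : D.V} (hpi : D.IsDominant pi) {β : D.V}
    (h : D.IsPosRoot β) : 0 ≤ D.coroot β pi := by
  obtain ⟨c, hcn, hrep⟩ := corootRepr h
  rw [hrep]
  have : (∑ j, c j • D.coroot (D.simple j)) pi
      = ∑ j, c j * D.coroot (D.simple j) pi := by
    simp [LinearMap.sum_apply, smul_eq_mul]
  rw [this]
  exact Finset.sum_nonneg fun j _ => mul_nonneg (hcn j) (hpi.2 j)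

/-- proportional roots have inversely proportional coroots -/
lemma coroot_smul_eq {γ δ : D.V} (hγ : γ ∈ D.roots) (hδ : δ ∈ D.roots) {q : ℚ}
    (hq : 0 < q) (h : δ = q • γ) : D.coroot δ = q⁻¹ • D.coroot γ := by
  have hBγ : 0 < D.BF (rt hγ) (rt hγ) := BF_rt_pos hγ
  have key : D.coroot δ - q⁻¹ • D.coroot γ = 0 := by
    apply span_phi_vanish
    · exact Submodule.sub_mem _ (coroot_mem_span hδ)
        (Submodule.smul_mem _ _ (coroot_mem_span hγ))
    · intro k
      have h1 := coroot_BF (D := D) hδ (D.bE k)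
      have h2 := coroot_BF (D := D) hγ (D.bE k)
      rw [bE_apply] at h1 h2
      have hrtδ : (rt hδ : D.E) = q • rt hγ := Subtype.ext h
      rw [hrtδ, BF_smul_right, BF_smul_left, BF_smul_right] at h1
      rw [LinearMap.sub_apply, LinearMap.smul_apply, smul_eq_mul]
      have hcancel : D.coroot δ (D.simple k) * q = D.coroot γ (D.simple k) := by
        have e1 : D.coroot δ (D.simple k) * (q * (q * D.BF (rt hγ) (rt hγ)))
            = q * (D.coroot γ (D.simple k) * D.BF (rt hγ) (rt hγ)) := by
          rw [h1, h2]
          ring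
        have e2 : (D.coroot δ (D.simple k) * q - D.coroot γ (D.simple k))
            * (q * D.BF (rt hγ) (rt hγ)) = 0 := by ring_nf; linarith [e1]
        rcases mul_eq_zero.mp e2 with h3 | h3
        · linarith
        · exfalso
          have : 0 < q * D.BF (rt hγ) (rt hγ) := mul_pos hq hBγ
          linarith
      rw [← hcancel]
      field_simp
      ring
  exact sub_eq_zero.mp key

/-- sign symmetry of the Cartan pairing -/
lemma coroot_symm_rel {β γ : D.V} (hβ : β ∈ D.roots) (hγ : γ ∈ D.roots) :
    D.coroot β γ * D.BF (rt hβ) (rt hβ)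
      = D.coroot γ β * D.BF (rt hγ) (rt hγ) := by
  have h1 := coroot_BF (D := D) hβ (rt hγ)
  have h2 := coroot_BF (D := D) hγ (rt hβ)
  rw [rt_val] at h1 h2
  rw [h1, h2, BF_symm]

lemma coroot_neg_of_neg {β γ : D.V} (hβ : β ∈ D.roots) (hγ : γ ∈ D.roots)
    (h : D.coroot β γ < 0) : D.coroot γ β < 0 := by
  have := coroot_symm_rel hβ hγ
  have hB1 := BF_rt_pos hβ
  have hB2 := BF_rt_pos hγ
  nlinarith

end WeylSetting
namespace WeylSetting

variable {D : WeylSetting}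

lemma isPosRoot_simple (i : D.I) : D.IsPosRoot (D.simple i) := by
  refine ⟨D.simple_mem i, fun j => if j = i then 1 else 0, ?_, ?_⟩
  · intro j; by_cases hj : j = i <;> simp [hj]
  · rw [sum_single_smul i 1, one_smul]

lemma srefl_multiple_simple {β : D.V} (hβ : D.IsPosRoot β) {i : D.I} {n : ℕ}
    (hn : 0 < n) (hβn : β = (n : ℚ) • D.simple i) : D.srefl β = D.s i := by
  have hq : (0:ℚ) < (n:ℚ) := by exact_mod_cast hn
  have hcor : D.coroot β = ((n:ℚ))⁻¹ • D.coroot (D.simple i) :=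
    coroot_smul_eq (D.simple_mem i) hβ.1 hq hβn
  apply eq_of_act_eq
  intro v
  rw [act_srefl _ hβ.1, act_s, hcor, hβn]
  rw [LinearMap.smul_apply, smul_eq_mul, smul_smul]
  congr 2
  field_simp

lemma act_wordProd_inv_cons (i : D.I) (l : List D.I) (β : D.V) :
    D.act (D.wordProd (i :: l))⁻¹ β = D.act (D.wordProd l)⁻¹ (D.act (D.s i) β) := by
  rw [wordProd_cons, mul_inv_rev, act_mul, s_inv]

/-- the deletion property -/
lemma deletion {l : List D.I} {β : D.V} (hβ : D.IsPosRoot β)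
    (hneg : ¬ D.IsPosRoot (D.act (D.wordProd l)⁻¹ β)) :
    ∃ k, k < l.length ∧ D.srefl β * D.wordProd l = D.wordProd (l.eraseIdx k) := by
  induction l generalizing β with
  | nil =>
    exfalso
    apply hneg
    rw [wordProd_nil]
    simpa [act_one] using hβ
  | cons i l ih =>
    by_cases hpos : D.IsPosRoot (D.act (D.s i) β)
    · have hneg' : ¬ D.IsPosRoot (D.act (D.wordProd l)⁻¹ (D.act (D.s i) β)) := by
        rw [← act_wordProd_inv_cons]
        exact hneg
      obtain ⟨k, hk, hke⟩ := ih hpos hneg'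
      refine ⟨k + 1, by simpa using hk, ?_⟩
      have hconj : D.srefl β = D.s i * D.srefl (D.act (D.s i) β) * D.s i := by
        have h0 := srefl_conj (D.s i) β hβ.1
        rw [s_inv] at h0
        calc D.srefl β = (D.s i * D.s i) * D.srefl β * (D.s i * D.s i) := by
              rw [s_sq]; group
        _ = D.s i * (D.s i * D.srefl β * D.s i) * D.s i := by group
        _ = D.s i * D.srefl (D.act (D.s i) β) * D.s i := by rw [h0]
      rw [wordProd_cons, hconj]
      have : D.s i * D.srefl (D.act (D.s i) β) * D.s i * (D.s i * D.wordProd l)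
          = D.s i * (D.srefl (D.act (D.s i) β) * D.wordProd l) := by
        rw [mul_assoc (D.s i * D.srefl (D.act (D.s i) β)) (D.s i),
          ← mul_assoc (D.s i) (D.s i), s_sq, one_mul, mul_assoc]
      rw [this, hke]
      rw [show (i :: l).eraseIdx (k+1) = i :: l.eraseIdx k from rfl, wordProd_cons]
    · obtain ⟨n, hn, hβn⟩ := multiple_of_reflect_neg hβ i hpos
      refine ⟨0, by simp, ?_⟩
      rw [srefl_multiple_simple hβ hn hβn, wordProd_cons, ← mul_assoc, s_sq, one_mul]
      rfl

lemma length_srefl_mul_lt {β : D.V} {g : D.W} (hβ : D.IsPosRoot β)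
    (hneg : ¬ D.IsPosRoot (D.act g⁻¹ β)) :
    D.length (D.srefl β * g) < D.length g := by
  obtain ⟨l, hp, hl⟩ := exists_reduced g
  subst hp
  obtain ⟨k, hk, hke⟩ := deletion hβ hneg
  have h1 : D.length (D.srefl β * D.wordProd l) ≤ (l.eraseIdx k).length :=
    length_le_of_word hke.symm
  have h2 : (l.eraseIdx k).length + 1 = l.length := List.length_eraseIdx_add_one hk
  omega

lemma length_srefl_mul_gt {β : D.V} {g : D.W} (hβ : D.IsPosRoot β)
    (hpos : D.IsPosRoot (D.act g⁻¹ β)) :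
    D.length g < D.length (D.srefl β * g) := by
  have hneg : ¬ D.IsPosRoot (D.act (D.srefl β * g)⁻¹ β) := by
    have : D.act (D.srefl β * g)⁻¹ β = -(D.act g⁻¹ β) := by
      rw [mul_inv_rev, act_mul, srefl_inv _ hβ.1, act_srefl _ hβ.1,
        D.coroot_self _ hβ.1, map_sub, map_smul]
      module
    rw [this]
    intro hc
    exact not_isPosRoot_both hpos hc
  have := length_srefl_mul_lt hβ hneg
  rwa [← mul_assoc, srefl_sq _ hβ.1, one_mul] at this

lemma length_s_mul_of_neg {i : D.I} {g : D.W}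
    (hneg : ¬ D.IsPosRoot (D.act g⁻¹ (D.simple i))) :
    D.length (D.s i * g) + 1 = D.length g := by
  have h1 : D.length (D.s i * g) < D.length g :=
    length_srefl_mul_lt (isPosRoot_simple i) hneg
  have h2 := length_s_mul_ge (D := D) i g
  omega

lemma length_s_mul_of_pos {i : D.I} {g : D.W}
    (hpos : D.IsPosRoot (D.act g⁻¹ (D.simple i))) :
    D.length (D.s i * g) = D.length g + 1 := by
  have h1 : D.length g < D.length (D.s i * g) :=
    length_srefl_mul_gt (isPosRoot_simple i) hpos
  have h2 := length_s_mul_le (D := D) i g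
  omega

lemma bruhatLE_length {a b : D.W} (h : D.bruhatLE a b) : D.length a ≤ D.length b := by
  induction h with
  | refl => exact le_refl _
  | tail _ hbc ih => exact le_trans ih (le_of_lt hbc.2)

lemma bruhatLT_length {a b : D.W} (h : D.bruhatLT a b) : D.length a < D.length b := by
  obtain ⟨hle, hne⟩ := h
  rcases Relation.ReflTransGen.cases_head hle with heq | ⟨c, hac, hcb⟩
  · exact absurd heq hne
  · exact lt_of_lt_of_le hac.2 (bruhatLE_length hcb)

end WeylSetting
namespace WeylSetting

variable {D : WeylSetting}

/-- the minuscule condition on a word -/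
def MinWord (D : WeylSetting) (pi : D.V) (l : List D.I) : Prop :=
  ∀ k : Fin l.length,
    D.coroot (D.simple (l.get k)) (D.act (D.wordProd (l.drop (k.val + 1))) pi) = 1

lemma isMinuscule_def {pi : D.V} {x : D.W} :
    D.IsMinuscule pi x ↔ ∃ l, D.IsReduced l x ∧ D.MinWord pi l := Iff.rfl

lemma minWord_nil {pi : D.V} : D.MinWord pi [] := fun k => absurd k.2 (by simp)

lemma minWord_head {pi : D.V} {i : D.I} {l : List D.I} (h : D.MinWord pi (i :: l)) :
    D.coroot (D.simple i) (D.act (D.wordProd l) pi) = 1 :=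
  h ⟨0, by simp⟩

lemma minWord_tail {pi : D.V} {i : D.I} {l : List D.I} (h : D.MinWord pi (i :: l)) :
    D.MinWord pi l := by
  intro k
  have := h k.succ
  simpa using this

lemma minWord_cons {pi : D.V} {i : D.I} {l : List D.I} (h : D.MinWord pi l)
    (hco : D.coroot (D.simple i) (D.act (D.wordProd l) pi) = 1) :
    D.MinWord pi (i :: l) := by
  intro k
  induction k using Fin.cases with
  | zero => simpa using hco
  | succ k => simpa using h k

lemma minWord_weight {pi : D.V} {l : List D.I} (h : D.MinWord pi l) :
    D.act (D.wordProd l) pi = pi - (l.map D.simple).sum := by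
  induction l with
  | nil => simp [wordProd_nil, act_one]
  | cons i l ih =>
    rw [wordProd_cons, act_mul, act_s, minWord_head h, ih (minWord_tail h)]
    simp only [List.map_cons, List.sum_cons, one_smul]
    abel

lemma htF_simple_listsum (l : List D.I) : D.htF (l.map D.simple).sum = l.length := by
  induction l with
  | nil => simp
  | cons i l ih =>
    simp only [List.map_cons, List.sum_cons, map_add, htF_simple, ih, List.length_cons]
    push_cast
    ring

lemma reduced_tail {i : D.I} {l : List D.I} {x : D.W} (h : D.IsReduced (i :: l) x) :
    D.IsReduced l (D.wordProd l) := by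
  obtain ⟨hp, hlen⟩ := h
  refine ⟨rfl, ?_⟩
  have h1 : D.length (D.wordProd l) ≤ l.length := length_le_of_word rfl
  have h2 : D.length x ≤ D.length (D.wordProd l) + 1 := by
    rw [← hp, wordProd_cons]
    exact length_s_mul_le i _
  simp only [List.length_cons] at hlen
  omega

/-- integrality : pairing of an integral weight minus a sum of roots with a coroot -/
lemma coroot_int_listsum {pi : D.V} (hint : D.IsIntegral pi) {β : D.V}
    (hβ : D.IsPosRoot β) (l : List D.I) :
    ∃ m : ℤ, D.coroot β (pi - (l.map D.simple).sum) = m := by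
  obtain ⟨n, hn⟩ := hint β hβ
  have : ∃ m : ℤ, D.coroot β ((l.map D.simple).sum) = m := by
    induction l with
    | nil => exact ⟨0, by simp⟩
    | cons i l ih =>
      obtain ⟨m, hm⟩ := ih
      obtain ⟨m', hm'⟩ := D.crystallographic β hβ.1 (D.simple i) (D.simple_mem i)
      exact ⟨m' + m, by push_cast; simp [map_add, hm, hm']⟩
  obtain ⟨m, hm⟩ := this
  exact ⟨n - m, by push_cast; simp [map_sub, hn, hm]⟩

lemma coroot_act_weight (g : D.W) {β : D.V} (hβ : β ∈ D.roots) (v : D.V) :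
    D.coroot β (D.act g v) = D.coroot (D.act g⁻¹ β) v := by
  have := D.coroot_equivariant g⁻¹ β hβ (D.act g v)
  rw [act_inv_act] at this
  exact this.symm

lemma posRoot_of_coroot_pos {pi : D.V} (hpi : D.IsDominant pi) {ε : D.V}
    (hε : ε ∈ D.roots) (h : 0 < D.coroot ε pi) : D.IsPosRoot ε := by
  by_contra hc
  have hneg := isPosRoot_neg_of_not hε hc
  have := coroot_dominant_nonneg hpi hneg
  rw [coroot_neg _ hε] at this
  linarith

lemma negRoot_of_coroot_neg {pi : D.V} (hpi : D.IsDominant pi) {ε : D.V}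
    (hε : ε ∈ D.roots) (h : D.coroot ε pi < 0) : D.IsPosRoot (-ε) := by
  by_contra hc
  have hpos : D.IsPosRoot ε := by
    rcases isPosRoot_or_neg hε with h' | h'
    · exact h'
    · exact absurd h' hc
  have := coroot_dominant_nonneg hpi hpos
  linarith

/-- key : `2β` cannot pair to an odd integer with a minuscule weight -/
lemma predominant_of_minWord {pi : D.V} (hpi : D.IsDominant pi) {l : List D.I}
    (h : D.MinWord pi l) :
    ∀ β, D.IsPosRoot β → -1 ≤ D.coroot β (D.act (D.wordProd l) pi) := by
  induction l with
  | nil =>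
    intro β hβ
    rw [wordProd_nil, act_one]
    have := coroot_dominant_nonneg hpi hβ
    linarith
  | cons i l ih =>
    intro β hβ
    have hu := minWord_tail h
    have hhead := minWord_head h
    have hx : D.act (D.wordProd (i :: l)) pi
        = D.act (D.s i) (D.act (D.wordProd l) pi) := by
      rw [wordProd_cons, act_mul]
    by_cases hpos : D.IsPosRoot (D.act (D.s i) β)
    · rw [hx, coroot_act_weight _ hβ.1, s_inv]
      exact ih hu _ hpos
    · obtain ⟨n, hn, hβn⟩ := multiple_of_reflect_neg hβ i hpos
      have hcor : D.coroot β = ((n:ℚ))⁻¹ • D.coroot (D.simple i) :=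
        coroot_smul_eq (D.simple_mem i) hβ.1 (by exact_mod_cast hn) hβn
      have hwi : D.coroot (D.simple i) (D.act (D.wordProd (i :: l)) pi) = -1 := by
        rw [hx, act_s, map_sub, map_smul, hhead, D.coroot_self _ (D.simple_mem i)]
        norm_num
      rw [hcor, LinearMap.smul_apply, smul_eq_mul, hwi]
      -- show -1 ≤ -(n⁻¹); need n = 1, i.e. exclude n ≥ 2
      have hn1 : n = 1 := by
        by_contra hne
        have hn2 : 2 ≤ n := by omega
        -- integrality of pairing of β with the weight of `l`
        obtain ⟨m, hm⟩ := coroot_int_listsum hpi.1 hβ l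
        rw [← minWord_weight hu] at hm
        rw [hcor, LinearMap.smul_apply, smul_eq_mul, hhead] at hm
        -- hm : (n:ℚ)⁻¹ * 1 = m
        have hq : (0:ℚ) < (n:ℚ) := by exact_mod_cast hn
        have h1 : (n:ℚ) * (m:ℚ) = 1 := by
          field_simp at hm
          linarith [hm]
        have h2 : (1:ℚ) ≤ (m:ℚ) ∨ (m:ℚ) ≤ 0 := by
          rcases le_or_gt 1 (m:ℚ) with h' | h'
          · exact Or.inl h'
          · right
            have : m < 1 := by exact_mod_cast h'
            have : m ≤ 0 := by omega
            exact_mod_cast this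
        rcases h2 with h' | h'
        · have : (2:ℚ) ≤ (n:ℚ) := by exact_mod_cast hn2
          nlinarith
        · nlinarith
      rw [hn1]
      norm_num

end WeylSetting
namespace WeylSetting

variable {D : WeylSetting}

lemma minuscule_predominant {pi : D.V} (hpi : D.IsDominant pi) {x : D.W}
    (hx : D.IsMinuscule pi x) : ∀ β, D.IsPosRoot β → -1 ≤ D.coroot β (D.act x pi) := by
  obtain ⟨l, hred, hmw⟩ := hx
  intro β hβ
  have := predominant_of_minWord hpi hmw β hβ
  rwa [hred.1] at this

lemma minuscule_htF {pi : D.V} {x : D.W} (hx : D.IsMinuscule pi x) :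
    D.htF (pi - D.act x pi) = (D.length x : ℚ) := by
  obtain ⟨l, hred, hmw⟩ := hx
  rw [← hred.1, minWord_weight hmw]
  have : pi - (pi - (l.map D.simple).sum) = (l.map D.simple).sum := by abel
  rw [this, htF_simple_listsum, hred.1, ← hred.2]

lemma minuscule_coroot_int {pi : D.V} (hint : D.IsIntegral pi) {x : D.W}
    (hx : D.IsMinuscule pi x) {β : D.V} (hβ : D.IsPosRoot β) :
    ∃ m : ℤ, D.coroot β (D.act x pi) = m := by
  obtain ⟨l, hred, hmw⟩ := hx
  rw [← hred.1, minWord_weight hmw]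
  exact coroot_int_listsum hint hβ l

/-- Stembridge's "unpeeling": if `⟨t(π), δ∨⟩ = -1` for `t` π-minuscule, there is a
π-minuscule element of weight `t(π) + δ`. -/
lemma minuscule_up {pi : D.V} (hpi : D.IsDominant pi) :
    ∀ N : ℕ, ∀ t : D.W, ∀ δ : D.V, D.length t ≤ N → D.IsMinuscule pi t →
      D.IsPosRoot δ → D.coroot δ (D.act t pi) = -1 →
      ∃ m, D.IsMinuscule pi m ∧ D.act m pi = D.act t pi + δ := by
  intro N
  induction N with
  | zero =>
    intro t δ hlen ht hδ hco
    exfalso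
    have ht1 : t = 1 := eq_one_of_length_zero (Nat.le_zero.mp hlen)
    rw [ht1, act_one] at hco
    have := coroot_dominant_nonneg hpi hδ
    linarith
  | succ N ih =>
    intro t δ hlen ht hδ hco
    obtain ⟨l, hred, hmw⟩ := ht
    cases l with
    | nil =>
      exfalso
      have ht1 : t = 1 := by rw [← hred.1, wordProd_nil]
      rw [ht1, act_one] at hco
      have := coroot_dominant_nonneg hpi hδ
      linarith
    | cons i l' =>
      set u := D.wordProd l' with hu
      have hured : D.IsReduced l' u := reduced_tail hred
      have humw : D.MinWord pi l' := minWord_tail hmw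
      have humin : D.IsMinuscule pi u := ⟨l', hured, humw⟩
      have hhead : D.coroot (D.simple i) (D.act u pi) = 1 := minWord_head hmw
      have htw : D.act t pi = D.act u pi - D.simple i := by
        rw [← hred.1, wordProd_cons, act_mul, act_s, hhead, one_smul]
      have hsit : D.s i * t = u := by
        rw [← hred.1, wordProd_cons, ← mul_assoc, s_sq, one_mul]
      have hsitw : D.act (D.s i) (D.act t pi) = D.act u pi := by
        rw [← act_mul, hsit]
      have hlt : D.length t = l'.length + 1 := by
        rw [← hred.2]; simp
      have hlu : D.length u = l'.length := hured.2.symm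
      have hluN : D.length u ≤ N := by omega
      have pre_t : ∀ β, D.IsPosRoot β → -1 ≤ D.coroot β (D.act t pi) :=
        minuscule_predominant hpi ⟨i :: l', hred, hmw⟩
      by_cases hpos : D.IsPosRoot (D.act (D.s i) δ)
      · -- main case
        obtain ⟨za, hza⟩ := D.crystallographic (D.simple i) (D.simple_mem i) δ hδ.1
        have hδ'' : D.act (D.s i) δ = δ - (za : ℚ) • D.simple i := by
          rw [act_s, hza]
        have hco'' : D.coroot (D.act (D.s i) δ) (D.act u pi) = -1 := by
          rw [← hsitw]
          have := D.coroot_equivariant (D.s i) δ hδ.1 (D.act t pi)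
          rw [this, hco]
        obtain ⟨m', hm'min, hm'w⟩ := ih u (D.act (D.s i) δ) hluN humin hpos hco''
        have hδ''i : D.coroot (D.simple i) (D.act (D.s i) δ) = -(za : ℚ) := by
          rw [hδ'', map_sub, map_smul, hza, D.coroot_self _ (D.simple_mem i)]
          simp only [smul_eq_mul]
          ring
        have he : D.coroot (D.simple i) (D.act m' pi) = 1 - (za:ℚ) := by
          rw [hm'w, map_add, hhead, hδ''i]
          ring
        have hcase : za ≤ -1 ∨ za = 0 ∨ za = 1 ∨ za = 2 ∨ 3 ≤ za := by omega
        rcases hcase with hza' | hza' | hza' | hza' | hza'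
        · -- za ≤ -1 : contradiction via predominance of t at s_i δ
          exfalso
          have hzaneg : D.coroot (D.simple i) δ < 0 := by
            rw [hza]
            exact_mod_cast (by omega : za < 0)
          have hb : D.coroot δ (D.simple i) < 0 :=
            coroot_neg_of_neg (D.simple_mem i) hδ.1 hzaneg
          have h1 : D.coroot (D.act (D.s i) δ) (D.act t pi)
              = D.coroot δ (D.act u pi) := by
            have h2 := D.coroot_equivariant (D.s i) δ hδ.1 (D.act (D.s i) (D.act t pi))
            rw [← act_mul, s_sq, act_one] at h2
            rw [h2, hsitw]
          have hval : D.coroot (D.act (D.s i) δ) (D.act t pi)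
              = -1 + D.coroot δ (D.simple i) := by
            rw [h1, show D.act u pi = D.act t pi + D.simple i from by rw [htw]; abel,
              map_add, hco]
          have := pre_t _ hpos
          rw [hval] at this
          linarith
        · -- za = 0 : prepend the letter i
          subst hza'
          have hδeq : D.act (D.s i) δ = δ := by rw [hδ'']; push_cast; simp
          rw [hδeq] at hm'w
          have he1 : D.coroot (D.simple i) (D.act m' pi) = 1 := by
            rw [he]; push_cast; ring
          have hposm : D.IsPosRoot (D.act m'⁻¹ (D.simple i)) := by
            apply posRoot_of_coroot_pos hpi (D.roots_invariant _ _ (D.simple_mem i))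
            rw [← coroot_act_weight m' (D.simple_mem i) pi, he1]
            norm_num
          obtain ⟨lm, hlmred, hlmmw⟩ := hm'min
          refine ⟨D.s i * m', ⟨i :: lm, ⟨?_, ?_⟩, ?_⟩, ?_⟩
          · rw [wordProd_cons, hlmred.1]
          · have := length_s_mul_of_pos hposm
            simp only [List.length_cons, this, hlmred.2.symm]
          · apply minWord_cons hlmmw
            rw [hlmred.1, he1]
          · rw [act_mul, act_s, he1, one_smul, hm'w, htw]
            abel
        · -- za = 1 : m' already works
          subst hza'
          refine ⟨m', hm'min, ?_⟩
          rw [hm'w, hδ'', htw]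
          push_cast
          module
        · -- za = 2 : one more application of the induction hypothesis
          subst hza'
          have he1 : D.coroot (D.simple i) (D.act m' pi) = -1 := by
            rw [he]; push_cast; ring
          have hlm' : D.length m' ≤ N := by
            have h1 := minuscule_htF hm'min
            have h2 := minuscule_htF humin
            have h3 : pi - D.act m' pi = (pi - D.act u pi) - D.act (D.s i) δ := by
              rw [hm'w]; abel
            have h4 : (1:ℚ) ≤ D.htF (D.act (D.s i) δ) := htF_posRoot_pos hpos
            rw [h3, map_sub, h2] at h1
            have : (D.length m' : ℚ) ≤ (D.length u : ℚ) - 1 := by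
              rw [← h1]; linarith
            have : (D.length m' : ℚ) < (D.length u : ℚ) := by linarith
            have := (Nat.cast_lt (α := ℚ)).mp this
            omega
          obtain ⟨m'', hm''min, hm''w⟩ := ih m' (D.simple i) hlm' hm'min
            (isPosRoot_simple i) he1
          refine ⟨m'', hm''min, ?_⟩
          rw [hm''w, hm'w, hδ'', htw]
          push_cast
          module
        · -- za ≥ 3 : contradiction with predominance of m'
          exfalso
          have := minuscule_predominant hpi hm'min (D.simple i) (isPosRoot_simple i)
          rw [he] at this
          have : (za:ℚ) ≤ 2 := by linarith
          have : za ≤ 2 := by exact_mod_cast this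
          omega
      · -- δ is a multiple of αᵢ
        obtain ⟨n, hn, hδn⟩ := multiple_of_reflect_neg hδ i hpos
        have hq : (0:ℚ) < (n:ℚ) := by exact_mod_cast hn
        have hcor : D.coroot δ = ((n:ℚ))⁻¹ • D.coroot (D.simple i) :=
          coroot_smul_eq (D.simple_mem i) hδ.1 hq hδn
        have hvali : D.coroot (D.simple i) (D.act t pi) = -(n:ℚ) := by
          have := hco
          rw [hcor, LinearMap.smul_apply, smul_eq_mul] at this
          field_simp at this
          linarith
        have hn1 : n = 1 := by
          by_contra hne
          have hn2 : 2 ≤ n := by omega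
          have := pre_t (D.simple i) (isPosRoot_simple i)
          rw [hvali] at this
          have : (n:ℚ) ≤ 1 := by linarith
          have : n ≤ 1 := by exact_mod_cast this
          omega
        subst hn1
        have hδi : δ = D.simple i := by rw [hδn]; push_cast; simp
        refine ⟨u, humin, ?_⟩
        rw [htw, hδi]
        abel

end WeylSetting
namespace WeylSetting

variable {D : WeylSetting}

lemma sameCoset_weight {pi : D.V} {x y : D.W} (h : D.SameCoset (D.stab pi) x y) :
    D.act x pi = D.act y pi := by
  have h1 : D.act (x⁻¹ * y) pi = pi := h
  rw [act_mul] at h1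
  calc D.act x pi = D.act x (D.act x⁻¹ (D.act y pi)) := by rw [h1]
  _ = D.act y pi := act_act_inv _ _

lemma sameCoset_of_weight {pi : D.V} {x y : D.W} (h : D.act x pi = D.act y pi) :
    D.SameCoset (D.stab pi) x y := by
  show D.act (x⁻¹ * y) pi = pi
  rw [act_mul, ← h, act_inv_act]

/-- every coset met by the Bruhat interval below a minuscule element contains a
minuscule element of the same weight -/
lemma exists_minuscule_coset {pi : D.V} (hpi : D.IsDominant pi) {w z : D.W}
    (hw : D.IsMinuscule pi w) (hz : D.bruhatLE z w) :
    ∃ m, D.IsMinuscule pi m ∧ D.act m pi = D.act z pi := by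
  induction hz using Relation.ReflTransGen.head_induction_on with
  | refl => exact ⟨w, hw, rfl⟩
  | head hzc hcb ih =>
    rename_i z c
    obtain ⟨m, hm, hmw⟩ := ih
    obtain ⟨⟨β, hβ, hc⟩, hlen⟩ := hzc
    have hzc' : z = D.srefl β * c := by
      rw [hc, ← mul_assoc, srefl_sq _ hβ.1, one_mul]
    have hzw : D.act z pi = D.act c pi - D.coroot β (D.act c pi) • β := by
      rw [hzc', act_mul, act_srefl _ hβ.1]
    have hq_m : D.coroot β (D.act m pi) = D.coroot β (D.act c pi) := by rw [hmw]
    obtain ⟨zq, hzq⟩ := minuscule_coroot_int hpi.1 hm hβ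
    rcases lt_trichotomy (D.coroot β (D.act c pi)) 0 with hq | hq | hq
    · have hpre := minuscule_predominant hpi hm β hβ
      have hq1 : D.coroot β (D.act c pi) = -1 := by
        have h1 : (zq:ℚ) < 0 := by rw [← hzq, hq_m]; exact hq
        have h2 : (-1:ℚ) ≤ (zq:ℚ) := by rw [← hzq]; exact hpre
        have h3 : zq = -1 := by
          have h4 : zq < 0 := by exact_mod_cast h1
          have h5 : (-1:ℤ) ≤ zq := by exact_mod_cast h2
          omega
        rw [← hq_m, hzq, h3]
        norm_num
      obtain ⟨m₁, hm₁, hm₁w⟩ := minuscule_up hpi (D.length m) m β le_rfl hm hβ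
        (by rw [hq_m, hq1])
      refine ⟨m₁, hm₁, ?_⟩
      rw [hm₁w, hmw, hzw, hq1]
      module
    · refine ⟨m, hm, ?_⟩
      rw [hmw, hzw, hq]
      simp
    · exfalso
      have hε : D.act c⁻¹ β ∈ D.roots := D.roots_invariant _ _ hβ.1
      have hpos : D.IsPosRoot (D.act c⁻¹ β) := by
        apply posRoot_of_coroot_pos hpi hε
        rw [← coroot_act_weight c hβ.1 pi]
        exact hq
      have hgt := length_srefl_mul_gt hβ hpos
      rw [← hzc'] at hgt
      omega

/-- a minimal coset representative whose coset contains a minuscule element is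
itself minuscule -/
lemma minuscule_of_minrep {pi : D.V} (hpi : D.IsDominant pi) :
    ∀ N x, D.length x ≤ N → D.IsMinRep (D.stab pi) x →
    (∃ m, D.IsMinuscule pi m ∧ D.act m pi = D.act x pi) → D.IsMinuscule pi x := by
  intro N
  induction N with
  | zero =>
    intro x hlen _ _
    have hx1 : x = 1 := eq_one_of_length_zero (Nat.le_zero.mp hlen)
    subst hx1
    exact ⟨[], ⟨rfl, length_one.symm⟩, minWord_nil⟩
  | succ N ih =>
    rintro x hlen hxr ⟨m, hm, hmw⟩
    obtain ⟨lm, hlmred, hlmmw⟩ := hm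
    cases lm with
    | nil =>
      have hm1 : m = 1 := by rw [← hlmred.1, wordProd_nil]
      have hxpi : D.act x pi = pi := by rw [← hmw, hm1, act_one]
      have hxinv : D.act x⁻¹ pi = pi := by
        conv_lhs => rw [← hxpi]
        rw [act_inv_act]
      have hx0 : D.length x ≤ 0 := by
        have := hxr 1 (show D.act (x⁻¹ * 1) pi = pi by rw [mul_one]; exact hxinv)
        simpa [length_one] using this
      have hx1 : x = 1 := eq_one_of_length_zero (Nat.le_zero.mp hx0)
      subst hx1
      exact ⟨[], ⟨rfl, length_one.symm⟩, minWord_nil⟩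
    | cons i lm' =>
      have hured : D.IsReduced lm' (D.wordProd lm') := reduced_tail hlmred
      have humw := minWord_tail hlmmw
      have hhead := minWord_head hlmmw
      have hmweight : D.act m pi = D.act (D.wordProd lm') pi - D.simple i := by
        rw [← hlmred.1, wordProd_cons, act_mul, act_s, hhead, one_smul]
      have hco : D.coroot (D.simple i) (D.act x pi) = -1 := by
        rw [← hmw, hmweight, map_sub, hhead, D.coroot_self _ (D.simple_mem i)]
        norm_num
      have hneg : ¬ D.IsPosRoot (D.act x⁻¹ (D.simple i)) := by
        intro hc
        have h1 : D.coroot (D.act x⁻¹ (D.simple i)) pi = -1 := by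
          rw [← coroot_act_weight x (D.simple_mem i) pi, hco]
        have := coroot_dominant_nonneg hpi hc
        linarith
      have hlx : D.length (D.s i * x) + 1 = D.length x := length_s_mul_of_neg hneg
      have hx'r : D.IsMinRep (D.stab pi) (D.s i * x) := by
        intro g hg
        have heq : (D.s i * x)⁻¹ * g = x⁻¹ * (D.s i * g) := by
          rw [mul_inv_rev, s_inv, mul_assoc]
        rw [heq] at hg
        have h2 := hxr _ hg
        have h3 := length_s_mul_le (D := D) i g
        omega
      have hx'w : D.act (D.s i * x) pi = D.act x pi + D.simple i := by
        rw [act_mul, act_s, hco]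
        module
      have hexists : ∃ m', D.IsMinuscule pi m'
          ∧ D.act m' pi = D.act (D.s i * x) pi := by
        refine ⟨D.wordProd lm', ⟨lm', hured, humw⟩, ?_⟩
        rw [hx'w, ← hmw, hmweight]
        abel
      have hx'min : D.IsMinuscule pi (D.s i * x) := ih (D.s i * x) (by omega) hx'r hexists
      obtain ⟨l', hl'red, hl'mw⟩ := hx'min
      refine ⟨i :: l', ⟨?_, ?_⟩, ?_⟩
      · rw [wordProd_cons, hl'red.1, ← mul_assoc, s_sq, one_mul]
      · simp only [List.length_cons]
        rw [hl'red.2]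
        omega
      · apply minWord_cons hl'mw
        rw [hl'red.1, hx'w, map_add, hco, D.coroot_self _ (D.simple_mem i)]
        norm_num

/-- uniqueness of minimal coset representatives (in the minuscule situation) -/
lemma minrep_weight_unique {pi : D.V} (hpi : D.IsDominant pi) :
    ∀ N x y, D.length x ≤ N → D.IsMinRep (D.stab pi) x → D.IsMinRep (D.stab pi) y →
      D.IsMinuscule pi x → D.act x pi = D.act y pi → x = y := by
  have key : ∀ {x y : D.W}, D.act x pi = pi → D.IsMinRep (D.stab pi) x → x = 1 := by
    intro x y hxpi hxr
    have hxinv : D.act x⁻¹ pi = pi := by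
      conv_lhs => rw [← hxpi]
      rw [act_inv_act]
    have hx0 : D.length x ≤ 0 := by
      have := hxr 1 (show D.act (x⁻¹ * 1) pi = pi by rw [mul_one]; exact hxinv)
      simpa [length_one] using this
    exact eq_one_of_length_zero (Nat.le_zero.mp hx0)
  intro N
  induction N with
  | zero =>
    intro x y hlen hxr hyr hxmin hw
    have hx1 : x = 1 := eq_one_of_length_zero (Nat.le_zero.mp hlen)
    subst hx1
    rw [act_one] at hw
    exact (key (x := y) (y := y) hw.symm hyr).symm
  | succ N ih =>
    intro x y hlen hxr hyr hxmin hw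
    obtain ⟨lx, hlxred, hlxmw⟩ := hxmin
    cases lx with
    | nil =>
      have hx1 : x = 1 := by rw [← hlxred.1, wordProd_nil]
      subst hx1
      rw [act_one] at hw
      exact (key (x := y) (y := y) hw.symm hyr).symm
    | cons i lx' =>
      have hured : D.IsReduced lx' (D.wordProd lx') := reduced_tail hlxred
      have humw := minWord_tail hlxmw
      have hhead := minWord_head hlxmw
      have hxweight : D.act x pi = D.act (D.wordProd lx') pi - D.simple i := by
        rw [← hlxred.1, wordProd_cons, act_mul, act_s, hhead, one_smul]
      have hco : D.coroot (D.simple i) (D.act x pi) = -1 := by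
        rw [hxweight, map_sub, hhead, D.coroot_self _ (D.simple_mem i)]
        norm_num
      have hnegf : ∀ z : D.W, D.act z pi = D.act x pi →
          ¬ D.IsPosRoot (D.act z⁻¹ (D.simple i)) := by
        intro z hz hc
        have h1 : D.coroot (D.act z⁻¹ (D.simple i)) pi = -1 := by
          rw [← coroot_act_weight z (D.simple_mem i) pi, hz, hco]
        have := coroot_dominant_nonneg hpi hc
        linarith
      have hlx : D.length (D.s i * x) + 1 = D.length x :=
        length_s_mul_of_neg (hnegf x rfl)
      have hly : D.length (D.s i * y) + 1 = D.length y :=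
        length_s_mul_of_neg (hnegf y hw.symm)
      have hminrep : ∀ z : D.W, D.IsMinRep (D.stab pi) z →
          D.length (D.s i * z) + 1 = D.length z → D.IsMinRep (D.stab pi) (D.s i * z) := by
        intro z hzr hzl g hg
        have heq : (D.s i * z)⁻¹ * g = z⁻¹ * (D.s i * g) := by
          rw [mul_inv_rev, s_inv, mul_assoc]
        rw [heq] at hg
        have h2 := hzr _ hg
        have h3 := length_s_mul_le (D := D) i g
        omega
      have hx'min : D.IsMinuscule pi (D.s i * x) := by
        refine ⟨lx', ?_, humw⟩
        have : D.s i * x = D.wordProd lx' := by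
          rw [← hlxred.1, wordProd_cons, ← mul_assoc, s_sq, one_mul]
        rw [this]
        exact hured
      have hweq : D.act (D.s i * x) pi = D.act (D.s i * y) pi := by
        rw [act_mul, act_mul, hw]
      have := ih (D.s i * x) (D.s i * y) (by omega)
        (hminrep x hxr hlx) (hminrep y hyr hly) hx'min hweq
      calc x = D.s i * (D.s i * x) := by rw [← mul_assoc, s_sq, one_mul]
      _ = D.s i * (D.s i * y) := by rw [this]
      _ = y := by rw [← mul_assoc, s_sq, one_mul]

/-- minimal representatives below a minuscule element are minuscule -/
lemma interval_minuscule {pi : D.V} (hpi : D.IsDominant pi) {w x : D.W}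
    (hw : D.IsMinuscule pi w) (hxw : D.bruhatLE x w)
    (hxr : D.IsMinRep (D.stab pi) x) : D.IsMinuscule pi x :=
  minuscule_of_minrep hpi (D.length x) x le_rfl hxr
    (exists_minuscule_coset hpi hw hxw)

end WeylSetting

namespace WeylSetting

variable {D : WeylSetting}

/-- the Chevalley multiplicity computation along an arrow -/
lemma arrow_weight {pi : D.V} (hpi : D.IsDominant pi) {t u : D.W} {β : D.V}
    (ht : D.IsMinuscule pi t) (har : D.Arrow (D.stab pi) u t β) :
    D.act u pi = D.act t pi + β := by
  obtain ⟨hβ, hur, htr, hcos, hbr⟩ := har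
  have humin : D.IsMinuscule pi u := interval_minuscule hpi ht hbr.1 hur
  have hwq : D.act u pi = D.act t pi - D.coroot β (D.act t pi) • β := by
    rw [← sameCoset_weight hcos, act_mul, act_srefl _ hβ.1]
  obtain ⟨zq, hzq⟩ := minuscule_coroot_int hpi.1 ht hβ
  have hhu := minuscule_htF humin
  have hht := minuscule_htF ht
  have hdiff : pi - D.act u pi = (pi - D.act t pi) + D.coroot β (D.act t pi) • β := by
    rw [hwq]; abel
  have hlen : (D.length u : ℚ) = (D.length t : ℚ)
      + D.coroot β (D.act t pi) * D.htF β := by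
    rw [← hhu, ← hht, hdiff, map_add, map_smul, smul_eq_mul]
  have hβht : 1 ≤ D.htF β := htF_posRoot_pos hβ
  have hlt : D.length u < D.length t := bruhatLT_length hbr
  have hltq : (D.length u : ℚ) < (D.length t : ℚ) := by exact_mod_cast hlt
  have hqneg : D.coroot β (D.act t pi) < 0 := by
    by_contra hq
    push_neg at hq
    nlinarith
  have hpre := minuscule_predominant hpi ht β hβ
  have hq1 : D.coroot β (D.act t pi) = -1 := by
    have h1 : (zq:ℚ) < 0 := by rw [← hzq]; exact hqneg
    have h1' : zq < 0 := by exact_mod_cast h1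
    have h2 : (-1:ℚ) ≤ (zq:ℚ) := by rw [← hzq]; exact hpre
    have h2' : (-1:ℤ) ≤ zq := by exact_mod_cast h2
    have h3 : zq = -1 := by omega
    rw [hzq, h3]
    norm_num
  rw [hwq, hq1]
  module

lemma path_weight {pi : D.V} (hpi : D.IsDominant pi) :
    ∀ (l : List D.V) (x t : D.W), D.IsMinuscule pi t →
      D.ArrowPathFromTo (D.stab pi) x t l → D.act x pi - D.act t pi = l.sum := by
  intro l
  induction l with
  | nil =>
    intro x t ht h
    have hxt : x = t := h
    rw [hxt]
    simp
  | cons β l ih =>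
    intro x t ht h
    obtain ⟨z, har, hp⟩ := h
    have hzmin : D.IsMinuscule pi z :=
      interval_minuscule hpi ht har.2.2.2.2.1 har.2.1
    have hzw := arrow_weight hpi ht har
    have hxz := ih x z hzmin hp
    rw [List.sum_cons, ← hxz, hzw]
    abel

end WeylSetting

open WeylSetting

/-- For `π`-minuscule `v < w` and the `Λ`-Bruhat graph on `[v,w]^P` with
constant admissible function `Λ ≡ π`: (1) every edge `x → y` with
`x W_P < y W_P = x s_γ W_P` has Chevalley multiplicity `⟨π, γ∨⟩ = 1`;
(2) every vertex weight `W_π(x) = x(π) - w(π)` equals the sum of the edge roots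
along any directed chain from `x` to `w`; (3) `W_π` is injective on `[v,w]^P`. -/
theorem minuscule_graph_properties
    (D : WeylSetting) (pi : D.V) (hpi : D.IsDominant pi)
    (v w : D.W) (hv : D.IsMinuscule pi v) (hw : D.IsMinuscule pi w)
    (hvr : D.IsMinRep (D.stab pi) v) (hwr : D.IsMinRep (D.stab pi) w)
    (hvw : D.bruhatLT v w) :
    (∀ x y : D.W, ∀ γ : D.V,
        D.IsMinRep (D.stab pi) x → D.IsMinRep (D.stab pi) y →
        D.bruhatLE v x → D.bruhatLE x w → D.bruhatLE v y → D.bruhatLE y w →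
        D.bruhatLT x y → D.IsPosRoot γ →
        D.SameCoset (D.stab pi) (x * D.srefl γ) y → D.coroot γ pi = 1) ∧
    (∀ x : D.W, D.IsMinRep (D.stab pi) x → D.bruhatLE v x → D.bruhatLE x w →
        ∀ l : List D.V, D.ArrowPathFromTo (D.stab pi) x w l →
          D.act x pi - D.act w pi = l.sum) ∧
    Set.InjOn (fun x => D.act x pi - D.act w pi)
      {x : D.W | D.IsMinRep (D.stab pi) x ∧ D.bruhatLE v x ∧ D.bruhatLE x w} := by
  refine ⟨?_, ?_, ?_⟩
  · -- (1) Chevalley multiplicities are 1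
    intro x y γ hxr hyr hvx hxw hvy hyw hxy hγ hcos
    have hxmin : D.IsMinuscule pi x := interval_minuscule hpi hw hxw hxr
    have hymin : D.IsMinuscule pi y := interval_minuscule hpi hw hyw hyr
    have hcnn : 0 ≤ D.coroot γ pi := coroot_dominant_nonneg hpi hγ
    obtain ⟨zc, hzc⟩ := hpi.1 γ hγ
    have hyweq : D.act y pi = D.act x pi - D.coroot γ pi • (D.act x γ) := by
      rw [← sameCoset_weight hcos, act_mul, act_srefl _ hγ.1, map_sub, map_smul]
    have hxγr : D.act x γ ∈ D.roots := D.roots_invariant x γ hγ.1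
    have hhx := minuscule_htF hxmin
    have hhy := minuscule_htF hymin
    have hdiff : pi - D.act y pi = (pi - D.act x pi) + D.coroot γ pi • D.act x γ := by
      rw [hyweq]; abel
    have hlen : (D.length y : ℚ) = (D.length x : ℚ)
        + D.coroot γ pi * D.htF (D.act x γ) := by
      rw [← hhy, ← hhx, hdiff, map_add, map_smul, smul_eq_mul]
    have hlt : D.length x < D.length y := bruhatLT_length hxy
    have hltq : (D.length x : ℚ) < (D.length y : ℚ) := by exact_mod_cast hlt
    have hprod : 0 < D.coroot γ pi * D.htF (D.act x γ) := by linarith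
    have hcpos : 0 < D.coroot γ pi := by
      rcases lt_or_eq_of_le hcnn with h | h
      · exact h
      · exfalso
        rw [← h, zero_mul] at hprod
        exact lt_irrefl _ hprod
    have hhtpos : 0 < D.htF (D.act x γ) := by
      by_contra hh
      push_neg at hh
      nlinarith
    have hxγpos : D.IsPosRoot (D.act x γ) := by
      rcases isPosRoot_or_neg hxγr with h | h
      · exact h
      · exfalso
        have := htF_posRoot_pos h
        rw [map_neg] at this
        linarith
    have hq : D.coroot (D.act x γ) (D.act y pi) = -(D.coroot γ pi) := by
      rw [hyweq, map_sub, map_smul]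
      have h1 : D.coroot (D.act x γ) (D.act x pi) = D.coroot γ pi :=
        D.coroot_equivariant x γ hγ.1 pi
      rw [h1, D.coroot_self _ hxγr]
      simp only [smul_eq_mul]
      ring
    have hpre := minuscule_predominant hpi hymin _ hxγpos
    rw [hq] at hpre
    -- 0 < c ≤ 1 and c integral
    have hc1 : D.coroot γ pi ≤ 1 := by linarith
    have hz1 : (0:ℚ) < (zc:ℚ) := by rw [← hzc]; exact hcpos
    have hz2 : (zc:ℚ) ≤ 1 := by rw [← hzc]; exact hc1
    have hz1' : 0 < zc := by exact_mod_cast hz1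
    have hz2' : zc ≤ 1 := by exact_mod_cast hz2
    have : zc = 1 := by omega
    rw [hzc, this]
    norm_num
  · -- (2) weights are sums of edge roots along chains
    intro x hxr hvx hxw l hpath
    exact path_weight hpi l x w hw hpath
  · -- (3) injectivity of the weight function
    intro x hx y hy heq
    simp only [Set.mem_setOf_eq] at hx hy
    have heq' : D.act x pi - D.act w pi = D.act y pi - D.act w pi := heq
    have hweq : D.act x pi = D.act y pi := by
      calc D.act x pi = (D.act x pi - D.act w pi) + D.act w pi := by abel
      _ = (D.act y pi - D.act w pi) + D.act w pi := by rw [heq']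
      _ = D.act y pi := by abel
    exact minrep_weight_unique hpi (D.length x) x y le_rfl hx.1 hy.1
      (interval_minuscule hpi hw hx.2.2 hx.1) hweq
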